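/- arXiv:1212.4712 — 10 statements merged into one kernel-verified Lean document; each statement's English description precedes it below -/
import Mathlib

section
/- Let 0 < s < 1 and let β : ℝ → ℝ be a measurable function such that for some constant c > 0 one has c·|θ|^(−1−2s) ≤ β(θ) ≤ c⁻¹·|θ|^(−1−2s) for all θ ∈ [−π/4, π/4] \ {0}. For each integer n ≥ 1 set λ_{2n} = ∫_{−π/4}^{π/4} β(θ)·(1 − (cos θ)^{2n} − (sin θ)^{2n}) dθ (the integral converges absolutely since the integrand is O(|θ|^{1−2s}) near θ = 0). Then for all integers j, k ≥ 2 one has the strict subadditivity λ_{2(j+k)} < λ_{2j} + λ_{2k}. -/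
open Real MeasureTheory

lemma abs_rpow_intervalIntegrable {r : ℝ} (h : -1 < r) (a b : ℝ) :
    IntervalIntegrable (fun x : ℝ => |x| ^ r) volume a b := by
  have H : ∀ d : ℝ, 0 ≤ d → IntervalIntegrable (fun x : ℝ => |x| ^ r) volume 0 d := by
    intro d hd
    have h1 := intervalIntegral.intervalIntegrable_rpow' (a := 0) (b := d) h
    rw [intervalIntegrable_iff, Set.uIoc_of_le hd] at h1 ⊢
    refine h1.congr_fun (fun x hx => ?_) measurableSet_Ioc
    rw [abs_of_pos hx.1]
  have key : ∀ d : ℝ, IntervalIntegrable (fun x : ℝ => |x| ^ r) volume 0 d := by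
    intro d
    rcases le_or_gt 0 d with hd | hd
    · exact H d hd
    · have h2 := (IntervalIntegrable.iff_comp_neg (by simp)).mp (H (-d) (by linarith))
      simpa using h2
  exact (key a).symm.trans (key b)

lemma Ekey {a b : ℝ} (hab : a + b = 1) (ha : 1/2 ≤ a) (hb : 0 ≤ b) {j k : ℕ} (hj : 2 ≤ j) (hk : 2 ≤ k) :
    (1 - a^(j+k) - b^(j+k)) - (1 - a^j - b^j) - (1 - a^k - b^k) ≤ -(b^2/4) := by
  have ha1 : a ≤ 1 := by linarith
  have ha0 : (0:ℝ) ≤ a := by linarith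
  have hb1 : b ≤ 1/2 := by linarith
  have haj : a^j ≤ a^2 := pow_le_pow_of_le_one ha0 ha1 hj
  have hak : a^k ≤ a^2 := pow_le_pow_of_le_one ha0 ha1 hk
  have hbj : b^j ≤ b^2 := pow_le_pow_of_le_one hb (by linarith) hj
  have hbk : b^k ≤ b^2 := pow_le_pow_of_le_one hb (by linarith) hk
  have haj1 : a^j ≤ 1 := pow_le_one₀ ha0 ha1
  have hak1 : a^k ≤ 1 := pow_le_one₀ ha0 ha1
  have ha2 : a^2 ≤ 1 := pow_le_one₀ ha0 ha1
  have key : (1 - a^2) * (1 - a^2) ≤ (1 - a^j) * (1 - a^k) :=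
    mul_le_mul (by linarith) (by linarith) (by linarith) (by linarith)
  have h94 : 9/4*b^2 ≤ (1-a^2)*(1-a^2) := by
    have hba : a = 1 - b := by linarith
    rw [hba]
    nlinarith [mul_nonneg (mul_nonneg hb hb)
      (mul_nonneg (by linarith : (0:ℝ) ≤ 1/2 - b) (by linarith : (0:ℝ) ≤ 7/2 - b))]
  have hbjk' : (0:ℝ) ≤ b^j * b^k := mul_nonneg (pow_nonneg hb j) (pow_nonneg hb k)
  rw [pow_add, pow_add]
  nlinarith [key, hbj, hbk, hbjk', h94, sq_nonneg b]

theorem eigenvalue_strict_subadditivity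
    (s : ℝ) (hs0 : 0 < s) (hs1 : s < 1) (β : ℝ → ℝ) (hβmeas : Measurable β)
    (c : ℝ) (hc : 0 < c)
    (hβbound : ∀ θ ∈ Set.Icc (-(π/4)) (π/4), θ ≠ 0 →
      c * |θ| ^ (-(1:ℝ) - 2*s) ≤ β θ ∧ β θ ≤ c⁻¹ * |θ| ^ (-(1:ℝ) - 2*s))
    (lam : ℕ → ℝ)
    (hlam : ∀ n : ℕ, 1 ≤ n →
      lam n = ∫ θ in (-(π/4))..(π/4),
        β θ * (1 - Real.cos θ ^ (2*n) - Real.sin θ ^ (2*n))) :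
    ∀ j k : ℕ, 2 ≤ j → 2 ≤ k → lam (j + k) < lam j + lam k := by
  have hπ4 : (0:ℝ) < π/4 := by positivity
  have hπ8 : (0:ℝ) < π/8 := by positivity
  -- positivity of β on the punctured interval
  have hβpos : ∀ θ ∈ Set.Icc (-(π/4)) (π/4), θ ≠ 0 → 0 < β θ := by
    intro θ hθ h0
    have h1 := (hβbound θ hθ h0).1
    have : 0 < c * |θ| ^ (-(1:ℝ) - 2*s) := by
      have : (0:ℝ) < |θ| := abs_pos.mpr h0
      positivity
    linarith
  -- trigonometric facts on the interval
  have hcos_sq : ∀ θ ∈ Set.Icc (-(π/4)) (π/4), (1:ℝ)/2 ≤ Real.cos θ ^ 2 := by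
    intro θ hθ
    have h1 : Real.cos (π/4) ≤ Real.cos |θ| := by
      apply Real.cos_le_cos_of_nonneg_of_le_pi (abs_nonneg θ)
      · linarith [Real.pi_pos]
      · rw [abs_le]; exact ⟨hθ.1, hθ.2⟩
    rw [Real.cos_abs] at h1
    rw [Real.cos_pi_div_four] at h1
    have h2 : (0:ℝ) ≤ Real.sqrt 2 / 2 := by positivity
    have h3 : (Real.sqrt 2 / 2) ^ 2 = 1/2 := by
      rw [div_pow, Real.sq_sqrt (by norm_num : (0:ℝ) ≤ 2)]; norm_num
    nlinarith [h1, h2]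
  -- pointwise bound giving integrability
  have hbound : ∀ n : ℕ, 1 ≤ n → ∀ θ ∈ Set.Ioc (-(π/4)) (π/4),
      ‖β θ * (1 - Real.cos θ ^ (2*n) - Real.sin θ ^ (2*n))‖
        ≤ c⁻¹ * (n+1) * |θ| ^ ((1:ℝ) - 2*s) := by
    intro n hn θ hθ
    rcases eq_or_ne θ 0 with rfl | h0
    · have h2n : 2*n ≠ 0 := by omega
      simp [zero_pow h2n]
      positivity
    · have hθ' : θ ∈ Set.Icc (-(π/4)) (π/4) := ⟨hθ.1.le, hθ.2⟩
      have hβu := (hβbound θ hθ' h0).2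
      have hβl : 0 < β θ := hβpos θ hθ' h0
      set a := Real.cos θ ^ 2 with ha_def
      set b := Real.sin θ ^ 2 with hb_def
      have hab : a + b = 1 := by rw [ha_def, hb_def]; exact Real.cos_sq_add_sin_sq θ
      have ha0 : 0 ≤ a := sq_nonneg _
      have hb0 : 0 ≤ b := sq_nonneg _
      have ha1 : a ≤ 1 := by linarith
      have hb1 : b ≤ 1 := by linarith
      have hcn : Real.cos θ ^ (2*n) = a^n := by rw [ha_def, ← pow_mul]
      have hsn : Real.sin θ ^ (2*n) = b^n := by rw [hb_def, ← pow_mul]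
      have hlow : 0 ≤ 1 - a^n - b^n := by
        have : a^n ≤ a := pow_le_of_le_one ha0 ha1 (by omega)
        have : b^n ≤ b := pow_le_of_le_one hb0 hb1 (by omega)
        have han : a^n ≤ a := pow_le_of_le_one ha0 ha1 (by omega)
        linarith
      have hup : 1 - a^n - b^n ≤ (n+1) * b := by
        have h1 : 1 + (n:ℝ) * (a - 1) ≤ a^n := by
          have := one_add_mul_le_pow (a := a - 1) (by linarith) n
          simpa using this
        have h2 : 0 ≤ b^n := pow_nonneg hb0 n
        have : 1 - a^n ≤ (n:ℝ) * b := by nlinarith [h1]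
        linarith
      have hsinθ : b ≤ θ^2 := by rw [hb_def]; exact Real.sin_sq_le_sq
      have hθpos : (0:ℝ) < |θ| := abs_pos.mpr h0
      rw [norm_mul, Real.norm_eq_abs, Real.norm_eq_abs, abs_of_pos hβl,
        hcn, hsn, abs_of_nonneg hlow]
      have h3 : ((n:ℝ)+1)*b ≤ ((n:ℝ)+1)*θ^2 :=
        mul_le_mul_of_nonneg_left hsinθ (by positivity)
      have key : β θ * (1 - a^n - b^n) ≤ (c⁻¹ * |θ| ^ (-(1:ℝ) - 2*s)) * (((n:ℝ)+1) * θ^2) := by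
        apply mul_le_mul hβu (by linarith) hlow (by positivity)
      have habs : |θ| ^ (-(1:ℝ) - 2*s) * θ^2 = |θ| ^ ((1:ℝ) - 2*s) := by
        rw [← sq_abs θ, ← Real.rpow_natCast |θ| 2, ← Real.rpow_add hθpos]
        norm_num
        congr 1
        ring
      calc β θ * (1 - a^n - b^n) ≤ (c⁻¹ * |θ| ^ (-(1:ℝ) - 2*s)) * (((n:ℝ)+1) * θ^2) := key
        _ = c⁻¹ * ((n:ℝ)+1) * (|θ| ^ (-(1:ℝ) - 2*s) * θ^2) := by ring
        _ = c⁻¹ * ((n:ℝ)+1) * |θ| ^ ((1:ℝ) - 2*s) := by rw [habs]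
  have hInt : ∀ n : ℕ, 1 ≤ n → IntervalIntegrable
      (fun θ => β θ * (1 - Real.cos θ ^ (2*n) - Real.sin θ ^ (2*n))) volume (-(π/4)) (π/4) := by
    intro n hn
    have hdom : IntervalIntegrable (fun θ : ℝ => c⁻¹ * (n+1) * |θ| ^ ((1:ℝ) - 2*s))
        volume (-(π/4)) (π/4) :=
      (abs_rpow_intervalIntegrable (by linarith) _ _).const_mul _
    rw [intervalIntegrable_iff, Set.uIoc_of_le (by linarith)] at hdom ⊢
    apply Integrable.mono' hdom
    · exact (hβmeas.mul (by fun_prop : Measurable fun θ : ℝ =>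
        (1 - Real.cos θ ^ (2*n) - Real.sin θ ^ (2*n)))).aestronglyMeasurable
    · filter_upwards [ae_restrict_mem measurableSet_Ioc] with θ hθ
      exact hbound n hn θ hθ
  intro j k hj hk
  set f : ℕ → ℝ → ℝ := fun n θ => β θ * (1 - Real.cos θ ^ (2*n) - Real.sin θ ^ (2*n)) with hf
  have hjk1 : 1 ≤ j + k := by omega
  have hsum : lam (j+k) - lam j - lam k
      = ∫ θ in (-(π/4))..(π/4), (f (j+k) θ - f j θ - f k θ) := by
    rw [hlam (j+k) hjk1, hlam j (by omega), hlam k (by omega),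
      intervalIntegral.integral_sub ((hInt (j+k) hjk1).sub (hInt j (by omega))) (hInt k (by omega)),
      intervalIntegral.integral_sub (hInt (j+k) hjk1) (hInt j (by omega))]
  set g : ℝ → ℝ := fun θ => f (j+k) θ - f j θ - f k θ with hg
  have hgint : IntervalIntegrable g volume (-(π/4)) (π/4) :=
    ((hInt (j+k) hjk1).sub (hInt j (by omega))).sub (hInt k (by omega))
  -- pointwise nonpositivity of g on the interval
  have hg_le : ∀ θ ∈ Set.Icc (-(π/4)) (π/4), θ ≠ 0 →
      g θ ≤ β θ * (-(Real.sin θ ^ 2) ^ 2 / 4) := by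
    intro θ hθ h0
    set a := Real.cos θ ^ 2 with ha_def
    set b := Real.sin θ ^ 2 with hb_def
    have hab : a + b = 1 := by rw [ha_def, hb_def]; exact Real.cos_sq_add_sin_sq θ
    have hb0 : 0 ≤ b := sq_nonneg _
    have ha : 1/2 ≤ a := hcos_sq θ hθ
    have hE := Ekey hab ha hb0 hj hk
    have hβ0 : 0 < β θ := hβpos θ hθ h0
    have hgθ : g θ = β θ * ((1 - a^(j+k) - b^(j+k)) - (1 - a^j - b^j) - (1 - a^k - b^k)) := by
      simp only [hg, hf, ha_def, hb_def, ← pow_mul]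
      ring_nf
    rw [hgθ]
    have : β θ * ((1 - a^(j+k) - b^(j+k)) - (1 - a^j - b^j) - (1 - a^k - b^k))
        ≤ β θ * (-(b^2/4)) := by
      apply mul_le_mul_of_nonneg_left hE hβ0.le
    calc _ ≤ β θ * (-(b^2/4)) := this
      _ = β θ * (-(Real.sin θ ^ 2) ^ 2 / 4) := by rw [hb_def]; ring
  have hg_nonpos : ∀ θ ∈ Set.Icc (-(π/4)) (π/4), g θ ≤ 0 := by
    intro θ hθ
    rcases eq_or_ne θ 0 with rfl | h0
    · have hjk0 : 2*(j+k) ≠ 0 := by omega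
      have hj0 : 2*j ≠ 0 := by omega
      have hk0 : 2*k ≠ 0 := by omega
      have : g 0 = 0 := by
        simp [hg, hf, zero_pow hjk0, zero_pow hj0, zero_pow hk0]
      linarith [this]
    · have h1 := hg_le θ hθ h0
      have hβ0 : 0 < β θ := hβpos θ hθ h0
      have h2 : β θ * (-(Real.sin θ ^ 2) ^ 2 / 4) ≤ 0 := by
        apply mul_nonpos_of_nonneg_of_nonpos hβ0.le
        have h3 : (0:ℝ) ≤ (Real.sin θ ^ 2) ^ 2 := by positivity
        linarith
      exact h1.trans h2
  -- split the integral at π/8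
  have hsub1 : IntervalIntegrable g volume (-(π/4)) (π/8) := by
    apply hgint.mono_set
    rw [Set.uIcc_of_le (by linarith), Set.uIcc_of_le (by linarith)]
    exact Set.Icc_subset_Icc le_rfl (by linarith)
  have hsub2 : IntervalIntegrable g volume (π/8) (π/4) := by
    apply hgint.mono_set
    rw [Set.uIcc_of_le (by linarith), Set.uIcc_of_le (by linarith)]
    exact Set.Icc_subset_Icc (by linarith) le_rfl
  have hsplit : (∫ θ in (-(π/4))..(π/8), g θ) + ∫ θ in (π/8)..(π/4), g θ
      = ∫ θ in (-(π/4))..(π/4), g θ :=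
    intervalIntegral.integral_add_adjacent_intervals hsub1 hsub2
  have h1 : (∫ θ in (-(π/4))..(π/8), g θ) ≤ 0 := by
    have h := intervalIntegral.integral_nonneg (f := fun θ => -g θ) (μ := volume)
      (by linarith : -(π/4) ≤ π/8)
      (fun u hu => by
        simpa using hg_nonpos u ⟨hu.1, by linarith [hu.2]⟩)
    rw [intervalIntegral.integral_neg] at h
    linarith
  have h2 : (0:ℝ) < ∫ θ in (π/8)..(π/4), -g θ := by
    apply intervalIntegral.intervalIntegral_pos_of_pos_on hsub2.neg _ (by linarith)
    intro x hx
    have hx0 : (0:ℝ) < x := lt_trans hπ8 hx.1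
    have hxI : x ∈ Set.Icc (-(π/4)) (π/4) := ⟨by linarith [hx.1], hx.2.le⟩
    have hsin : 0 < Real.sin x := Real.sin_pos_of_pos_of_lt_pi hx0 (by linarith [Real.pi_pos, hx.2])
    have hle := hg_le x hxI hx0.ne'
    have hβ0 : 0 < β x := hβpos x hxI hx0.ne'
    have h5 : β x * (-(Real.sin x ^ 2) ^ 2 / 4) < 0 := by
      apply mul_neg_of_pos_of_neg hβ0
      have h6 : (0:ℝ) < (Real.sin x ^ 2) ^ 2 := by positivity
      linarith
    simpa using lt_of_le_of_lt hle h5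
  rw [intervalIntegral.integral_neg] at h2
  have : (∫ θ in (-(π/4))..(π/4), g θ) < 0 := by
    rw [← hsplit]; linarith
  have hgoal : lam (j+k) - lam j - lam k < 0 := by rw [hsum]; exact this
  linarith
end

section
/- For all integers j, k ≥ 2 and every θ ∈ [−π/4, π/4] with θ ≠ 0, one has 1 + (cos θ)^{2(j+k)} + (sin θ)^{2(j+k)} − (cos θ)^{2j} − (sin θ)^{2j} − (cos θ)^{2k} − (sin θ)^{2k} > 0. -/
open Real

lemma trig_aux (c s a b u v : ℝ) (hc0 : 0 < c) (hs0 : 0 < s) (hcs : s + c = 1)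
    (ha : a ≤ c ^ 2) (hb : b ≤ c ^ 2) (hu : u ≤ s ^ 2) (hv : v ≤ s ^ 2)
    (ha1 : a ≤ 1) (hb1 : b ≤ 1) (hu1 : u ≤ 1) (hv1 : v ≤ 1) :
    0 < 1 + a * b + u * v - a - u - b - v := by
  have hc2 : c ^ 2 ≤ 1 := by nlinarith
  have hs2 : s ^ 2 ≤ 1 := by nlinarith
  have h1 : (1 - c ^ 2) * (1 - c ^ 2) ≤ (1 - a) * (1 - b) :=
    mul_le_mul (by linarith) (by linarith) (by linarith) (by linarith)
  have h2 : (1 - s ^ 2) * (1 - s ^ 2) ≤ (1 - u) * (1 - v) :=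
    mul_le_mul (by linarith) (by linarith) (by linarith) (by linarith)
  have hid : (1 - c ^ 2) * (1 - c ^ 2) + (1 - s ^ 2) * (1 - s ^ 2) - 1
      = 2 * (c * s) ^ 2 := by
    have hs' : s = 1 - c := by linarith
    rw [hs']; ring
  have hpos : 0 < (c * s) ^ 2 := by positivity
  nlinarith [h1, h2, hid, hpos]

theorem trig_pointwise_inequality (j k : ℕ) (hj : 2 ≤ j) (hk : 2 ≤ k) (θ : ℝ)
    (hθ : θ ∈ Set.Icc (-(π/4)) (π/4)) (hθ0 : θ ≠ 0) :
    0 < 1 + Real.cos θ ^ (2*(j+k)) + Real.sin θ ^ (2*(j+k))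
      - Real.cos θ ^ (2*j) - Real.sin θ ^ (2*j)
      - Real.cos θ ^ (2*k) - Real.sin θ ^ (2*k) := by
  obtain ⟨hl, hr⟩ := hθ
  have hpi := Real.pi_pos
  have hθlt : θ < π / 2 := lt_of_le_of_lt hr (by linarith)
  have hθgt : -(π / 2) < θ := lt_of_lt_of_le (by linarith) hl
  have hcos : 0 < Real.cos θ := Real.cos_pos_of_mem_Ioo ⟨hθgt, hθlt⟩
  have hsin : Real.sin θ ≠ 0 := by
    intro h
    exact hθ0 ((Real.sin_eq_zero_iff_of_lt_of_lt (by linarith) (by linarith)).mp h)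
  set c : ℝ := Real.cos θ ^ 2 with hc
  set s : ℝ := Real.sin θ ^ 2 with hs
  have hc0 : 0 < c := by positivity
  have hs0 : 0 < s := by positivity
  have hcs : s + c = 1 := Real.sin_sq_add_cos_sq θ
  have hc1 : c ≤ 1 := by linarith
  have hs1 : s ≤ 1 := by linarith
  have hcj : c ^ j ≤ c ^ 2 := pow_le_pow_of_le_one hc0.le hc1 hj
  have hck : c ^ k ≤ c ^ 2 := pow_le_pow_of_le_one hc0.le hc1 hk
  have hsj : s ^ j ≤ s ^ 2 := pow_le_pow_of_le_one hs0.le hs1 hj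
  have hsk : s ^ k ≤ s ^ 2 := pow_le_pow_of_le_one hs0.le hs1 hk
  have hcj1 : c ^ j ≤ 1 := pow_le_one₀ hc0.le hc1
  have hck1 : c ^ k ≤ 1 := pow_le_one₀ hc0.le hc1
  have hsj1 : s ^ j ≤ 1 := pow_le_one₀ hs0.le hs1
  have hsk1 : s ^ k ≤ 1 := pow_le_one₀ hs0.le hs1
  have e1 : Real.cos θ ^ (2 * (j + k)) = c ^ j * c ^ k := by
    rw [pow_mul, ← pow_add]
  have e2 : Real.sin θ ^ (2 * (j + k)) = s ^ j * s ^ k := by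
    rw [pow_mul, ← pow_add]
  have e3 : Real.cos θ ^ (2 * j) = c ^ j := by rw [pow_mul]
  have e4 : Real.sin θ ^ (2 * j) = s ^ j := by rw [pow_mul]
  have e5 : Real.cos θ ^ (2 * k) = c ^ k := by rw [pow_mul]
  have e6 : Real.sin θ ^ (2 * k) = s ^ k := by rw [pow_mul]
  rw [e1, e2, e3, e4, e5, e6]
  exact trig_aux c s (c ^ j) (c ^ k) (s ^ j) (s ^ k) hc0 hs0 hcs hcj hck hsj hsk
    hcj1 hck1 hsj1 hsk1
end

section
/- For all integers j, k ≥ 2 with (j, k) ≠ (2, 2) and every real t with 0 < t ≤ 1/2, one has 1 + (1−t)^{j+k} + t^{j+k} − (1−t)^j − t^j − (1−t)^k − t^k > 0. -/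
theorem polynomial_inequality (j k : ℕ) (hj : 2 ≤ j) (hk : 2 ≤ k)
    (hjk : ¬(j = 2 ∧ k = 2)) (t : ℝ) (ht0 : 0 < t) (ht : t ≤ 1/2) :
    0 < 1 + (1-t)^(j+k) + t^(j+k) - (1-t)^j - t^j - (1-t)^k - t^k := by
  have ht1 : t < 1 := by linarith
  have ha0 : (0:ℝ) ≤ 1 - t := by linarith
  have ha1 : (1:ℝ) - t ≤ 1 := by linarith
  have haj : (1-t)^j ≤ (1-t)^2 := pow_le_pow_of_le_one ha0 ha1 hj
  have hak : (1-t)^k ≤ (1-t)^2 := pow_le_pow_of_le_one ha0 ha1 hk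
  have htj : t^j ≤ t^2 := pow_le_pow_of_le_one ht0.le ht1.le hj
  have htk : t^k ≤ t^2 := pow_le_pow_of_le_one ht0.le ht1.le hk
  have ha2 : (1-t)^2 ≤ 1 := pow_le_one₀ ha0 ha1
  have ht2 : t^2 ≤ 1 := pow_le_one₀ ht0.le ht1.le
  have h1 : (1-(1-t)^2)*(1-(1-t)^2) ≤ (1-(1-t)^j)*(1-(1-t)^k) :=
    mul_le_mul (by linarith) (by linarith) (by linarith) (by linarith)
  have h2 : (1-t^2)*(1-t^2) ≤ (1-t^j)*(1-t^k) :=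
    mul_le_mul (by linarith) (by linarith) (by linarith) (by linarith)
  have hpos : 0 < t * t * ((1-t) * (1-t)) :=
    mul_pos (mul_pos ht0 ht0) (mul_pos (by linarith) (by linarith))
  rw [pow_add, pow_add]
  nlinarith [h1, h2, hpos]
end

section
/- For all integers j, k ≥ 2 and every real t with 0 < t ≤ 1/2, one has the product lower bound (1 − (1−t)^j)·(1 − (1−t)^k) ≥ t^j + t^k. -/
theorem product_lower_bound (j k : ℕ) (hj : 2 ≤ j) (hk : 2 ≤ k)
    (t : ℝ) (ht0 : 0 < t) (ht : t ≤ 1/2) :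
    t^j + t^k ≤ (1 - (1-t)^j) * (1 - (1-t)^k) := by
  have h1t0 : (0:ℝ) ≤ 1 - t := by linarith
  have h1t1 : 1 - t ≤ 1 := by linarith
  have hA : (1-t)^j ≤ (1-t)^2 := pow_le_pow_of_le_one h1t0 h1t1 hj
  have hB : (1-t)^k ≤ (1-t)^2 := pow_le_pow_of_le_one h1t0 h1t1 hk
  have hAnn : 0 ≤ 1 - (1-t)^2 := by nlinarith
  have htj : t^j ≤ t^2 := pow_le_pow_of_le_one ht0.le (by linarith) hj
  have htk : t^k ≤ t^2 := pow_le_pow_of_le_one ht0.le (by linarith) hk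
  have key : 2 * t^2 ≤ (1 - (1-t)^2) * (1 - (1-t)^2) := by nlinarith
  calc t^j + t^k ≤ 2 * t^2 := by linarith
    _ ≤ (1 - (1-t)^2) * (1 - (1-t)^2) := key
    _ ≤ (1 - (1-t)^j) * (1 - (1-t)^k) := by
        apply mul_le_mul (by linarith) (by linarith) hAnn (by linarith)
end

section
/- Let 0 < s < 1. There exists a constant C > 0 such that for all integers n ≥ 1 and m ≥ 0, one has √(C(2n+2m, 2n))·Γ(n−s)·m!/Γ(n+m+1−s) ≤ C·n^{−3/4}·(1 + m/n)^s, where C(a, b) denotes the binomial coefficient a choose b and Γ denotes the real Gamma function. -/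
open Real

set_option maxHeartbeats 1000000

lemma aux_nat1 (k : ℕ) (hk : 1 ≤ k) : 16 ^ k ≤ 4 * k * (Nat.centralBinom k)^2 := by
  induction k with
  | zero => omega
  | succ n ih =>
    rcases Nat.eq_or_lt_of_le hk with h | h
    · obtain rfl : n = 0 := by omega
      decide
    · have hn : 1 ≤ n := by omega
      have ih' := ih hn
      have key := Nat.succ_mul_centralBinom_succ n
      -- (n+1) * C(n+1) = 2*(2n+1)*C n
      have h2 : (n+1)^2 * (Nat.centralBinom (n+1))^2 = 4 * (2*n+1)^2 * (Nat.centralBinom n)^2 := by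
        have := congrArg (· ^ 2) key
        simpa [mul_pow] using this |>.trans (by ring)
      -- goal: 16^(n+1) ≤ 4*(n+1)*C(n+1)^2
      have hmain : (n+1) * (16 ^ (n+1)) ≤ (n+1) * (4 * (n+1) * (Nat.centralBinom (n+1))^2) := by
        have : (n+1) * (4 * (n+1) * (Nat.centralBinom (n+1))^2)
            = 4 * ((n+1)^2 * (Nat.centralBinom (n+1))^2) := by ring
        rw [this, h2]
        have hineq : 16 * (4 * n * (n+1)) ≤ 4 * (4 * (2*n+1)^2) := by nlinarith
        calc (n+1) * 16 ^ (n+1) = 16 * (n+1) * 16 ^ n := by ring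
          _ ≤ 16 * (n+1) * (4 * n * (Nat.centralBinom n)^2) := by
              exact Nat.mul_le_mul_left _ ih'
          _ = (16 * (4 * n * (n+1))) * (Nat.centralBinom n)^2 := by ring
          _ ≤ (4 * (4 * (2*n+1)^2)) * (Nat.centralBinom n)^2 := Nat.mul_le_mul_right _ hineq
          _ = 4 * (4 * (2*n+1)^2 * (Nat.centralBinom n)^2) := by ring
      exact Nat.le_of_mul_le_mul_left hmain (by omega)

lemma aux_nat2 (k : ℕ) : (k+1) * (Nat.centralBinom k)^2 ≤ 16 ^ k := by
  induction k with
  | zero => simp [Nat.centralBinom]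
  | succ n ih =>
    have key := Nat.succ_mul_centralBinom_succ n
    have h2 : (n+1)^2 * (Nat.centralBinom (n+1))^2 = 4 * (2*n+1)^2 * (Nat.centralBinom n)^2 := by
      have := congrArg (· ^ 2) key
      simpa [mul_pow] using this |>.trans (by ring)
    have hmain : (n+1)^2 * ((n+1+1) * (Nat.centralBinom (n+1))^2) ≤ (n+1)^2 * 16 ^ (n+1) := by
      have e1 : (n+1)^2 * ((n+1+1) * (Nat.centralBinom (n+1))^2)
          = (n+2) * ((n+1)^2 * (Nat.centralBinom (n+1))^2) := by ring
      rw [e1, h2]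
      have hineq : (n+2) * (4 * (2*n+1)^2) ≤ 16 * (n+1)^3 := by nlinarith
      calc (n+2) * (4 * (2*n+1)^2 * (Nat.centralBinom n)^2)
          = ((n+2) * (4 * (2*n+1)^2)) * (Nat.centralBinom n)^2 := by ring
        _ ≤ (16 * (n+1)^3) * (Nat.centralBinom n)^2 := Nat.mul_le_mul_right _ hineq
        _ = (16 * (n+1)^2) * ((n+1) * (Nat.centralBinom n)^2) := by ring
        _ ≤ (16 * (n+1)^2) * 16 ^ n := Nat.mul_le_mul_left _ ih
        _ = (n+1)^2 * 16 ^ (n+1) := by ring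
    exact Nat.le_of_mul_le_mul_left hmain (by positivity)

lemma aux_choose_id (n m : ℕ) :
    ((2*n+2*m).choose (2*n)) * Nat.centralBinom n * Nat.centralBinom m
      = ((n+m).choose n)^2 * Nat.centralBinom (n+m) := by
  have h : (((2*n+2*m).choose (2*n)) * Nat.centralBinom n * Nat.centralBinom m : ℝ)
      = (((n+m).choose n)^2 * Nat.centralBinom (n+m) : ℝ) := by
    rw [Nat.centralBinom_eq_two_mul_choose, Nat.centralBinom_eq_two_mul_choose,
      Nat.centralBinom_eq_two_mul_choose]
    push_cast
    rw [Nat.cast_choose ℝ (show 2*n ≤ 2*n+2*m by omega),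
        Nat.cast_choose ℝ (show n ≤ 2*n by omega),
        Nat.cast_choose ℝ (show m ≤ 2*m by omega),
        Nat.cast_choose ℝ (show n ≤ n+m by omega),
        Nat.cast_choose ℝ (show n+m ≤ 2*(n+m) by omega)]
    have e1 : 2*n+2*m - 2*n = 2*m := by omega
    have e2 : 2*n - n = n := by omega
    have e3 : 2*m - m = m := by omega
    have e4 : n+m - n = m := by omega
    have e5 : 2*(n+m) - (n+m) = n+m := by omega
    rw [e1, e2, e3, e4, e5]
    have h1 : (2*(n+m)) = 2*n+2*m := by omega
    rw [h1]
    have f0 : ∀ k : ℕ, (Nat.factorial k : ℝ) ≠ 0 := fun k => Nat.cast_ne_zero.2 (Nat.factorial_ne_zero k)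
    field_simp
  exact_mod_cast h

lemma aux_chooseSq (n m : ℕ) (hn : 1 ≤ n) :
    ((2*n+2*m).choose (2*n))^2 ≤ 16 * n * ((n+m).choose n)^4 := by
  rcases Nat.eq_zero_or_pos m with rfl | hm
  · simp only [Nat.mul_zero, Nat.add_zero, Nat.choose_self, one_pow]
    omega
  · set X := (2*n+2*m).choose (2*n) with hX
    set a := n + m with ha
    set Cn := Nat.centralBinom n
    set Cm := Nat.centralBinom m
    set Ca := Nat.centralBinom a
    set D := (n+m).choose n with hD
    have hid : X * Cn * Cm = D^2 * Ca := aux_choose_id n m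
    have h1 : 16 ^ n ≤ 4 * n * Cn^2 := aux_nat1 n hn
    have h2 : 16 ^ m ≤ 4 * m * Cm^2 := aux_nat1 m hm
    have h3 : (a+1) * Ca^2 ≤ 16 ^ a := aux_nat2 a
    have step1 : ((a+1) * 16^a) * X^2 ≤ ((a+1) * 16^a) * (16 * n * D^4) := by
      have e16 : (16:ℕ)^a = 16^n * 16^m := by rw [ha, pow_add]
      calc ((a+1) * 16^a) * X^2 = (a+1) * X^2 * (16^n * 16^m) := by rw [e16]; ring
        _ ≤ (a+1) * X^2 * ((4*n*Cn^2) * (4*m*Cm^2)) :=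
            Nat.mul_le_mul_left _ (Nat.mul_le_mul h1 h2)
        _ = 16 * n * m * (a+1) * (X * Cn * Cm)^2 := by ring
        _ = 16 * n * m * (a+1) * (D^2 * Ca)^2 := by rw [hid]
        _ = 16 * n * m * D^4 * ((a+1) * Ca^2) := by ring
        _ ≤ 16 * n * m * D^4 * 16^a := Nat.mul_le_mul_left _ h3
        _ ≤ 16 * n * (a+1) * D^4 * 16^a := by
            have : m ≤ a + 1 := by omega
            exact Nat.mul_le_mul_right _ (Nat.mul_le_mul_right _ (Nat.mul_le_mul_left _ this))
        _ = ((a+1) * 16^a) * (16 * n * D^4) := by ring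
    exact Nat.le_of_mul_le_mul_left step1 (by positivity)

lemma aux_gamma_conv {x t : ℝ} (hx : 0 < x) (ht0 : 0 < t) (ht1 : t < 1) :
    Real.Gamma (x + t) ≤ Real.Gamma x * x ^ t := by
  have hmem1 : x ∈ Set.Ioi (0:ℝ) := hx
  have hmem2 : x + 1 ∈ Set.Ioi (0:ℝ) := by simp; linarith
  have hc := Real.convexOn_log_Gamma.2 hmem1 hmem2 (by linarith : (0:ℝ) ≤ 1 - t)
    (le_of_lt ht0) (by ring)
  simp only [smul_eq_mul, Function.comp_apply] at hc
  have harg : (1 - t) * x + t * (x + 1) = x + t := by ring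
  rw [harg] at hc
  -- hc : log (Gamma (x+t)) ≤ (1-t) * log (Gamma x) + t * log (Gamma (x+1))
  have hgx : 0 < Real.Gamma x := Real.Gamma_pos_of_pos hx
  have hgxt : 0 < Real.Gamma (x + t) := Real.Gamma_pos_of_pos (by linarith)
  have hG1 : Real.Gamma (x + 1) = x * Real.Gamma x := Real.Gamma_add_one (ne_of_gt hx)
  rw [hG1, Real.log_mul (ne_of_gt hx) (ne_of_gt hgx)] at hc
  have hc2 : Real.log (Real.Gamma (x + t)) ≤ Real.log (Real.Gamma x) + t * Real.log x := by
    linarith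
  have := Real.exp_le_exp.2 hc2
  rwa [Real.exp_log hgxt, Real.exp_add, Real.exp_log hgx,
    mul_comm t (Real.log x), ← Real.rpow_def_of_pos hx] at this

lemma aux_gamma_ratio (s : ℝ) (hs0 : 0 < s) (hs1 : s < 1) (n : ℕ) (hn : 1 ≤ n) :
    Real.Gamma ((n:ℝ) - s) * (n:ℝ) ^ ((1:ℝ)+s)
      ≤ (2*(Real.Gamma (1-s)+1)) * (Nat.factorial n : ℝ) := by
  have hN : (1:ℝ) ≤ (n:ℝ) := by exact_mod_cast hn
  rcases Nat.lt_or_ge n 2 with h2 | h2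
  · obtain rfl : n = 1 := by omega
    have hG : 0 < Real.Gamma (1-s) := Real.Gamma_pos_of_pos (by linarith)
    simp only [Nat.cast_one, Real.one_rpow, Nat.factorial_one, Nat.cast_one]
    nlinarith
  · have hN2 : (2:ℝ) ≤ (n:ℝ) := by exact_mod_cast h2
    set N := (n:ℝ) with hNdef
    have hN1 : 0 < N - 1 := by linarith
    have hconv : Real.Gamma ((N-1) + (1-s)) ≤ Real.Gamma (N-1) * (N-1) ^ (1-s) :=
      aux_gamma_conv hN1 (by linarith) (by linarith)
    have harg : (N-1) + (1-s) = N - s := by ring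
    rw [harg] at hconv
    have hGN1 : 0 < Real.Gamma (N-1) := Real.Gamma_pos_of_pos hN1
    have hGam : Real.Gamma N = (N-1) * Real.Gamma (N-1) := by
      have := Real.Gamma_add_one (ne_of_gt hN1)
      rwa [sub_add_cancel] at this
    have hfact : (Nat.factorial n : ℝ) = N * Real.Gamma N := by
      have h := Real.Gamma_nat_eq_factorial n
      have h1 : Real.Gamma (N + 1) = N * Real.Gamma N :=
        Real.Gamma_add_one (by positivity)
      rw [← h]
      exact h1
    -- key numeric: (N-1)^(1-s) * N^(1+s) ≤ 2 * N * (N-1)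
    have hkey : (N-1) ^ (1-s) * N ^ ((1:ℝ)+s) ≤ 2 * (N * (N-1)) := by
      have e1 : (N-1) ^ (1-s) = (N-1) * ((N-1) ^ s)⁻¹ := by
        rw [show (1:ℝ)-s = 1 + (-s) by ring, Real.rpow_add hN1, Real.rpow_one,
          Real.rpow_neg hN1.le]
      have e2 : N ^ ((1:ℝ)+s) = N * N ^ s := by
        rw [Real.rpow_add (by linarith : (0:ℝ) < N), Real.rpow_one]
      have hs2 : N ^ s ≤ 2 * (N-1) ^ s := by
        calc N ^ s ≤ (2*(N-1)) ^ s := by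
              apply Real.rpow_le_rpow (by linarith) (by linarith) hs0.le
          _ = 2 ^ s * (N-1) ^ s := Real.mul_rpow (by norm_num) hN1.le
          _ ≤ 2 * (N-1) ^ s := by
              have h2s : (2:ℝ) ^ s ≤ 2 ^ (1:ℝ) :=
                Real.rpow_le_rpow_of_exponent_le (by norm_num) hs1.le
              rw [Real.rpow_one] at h2s
              have : 0 ≤ (N-1)^s := (Real.rpow_pos_of_pos hN1 s).le
              nlinarith
      rw [e1, e2]
      have hp : 0 < (N-1) ^ s := Real.rpow_pos_of_pos hN1 s
      rw [show (N-1) * ((N-1)^s)⁻¹ * (N * N ^ s) = (N-1) * N * (N^s / (N-1)^s) by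
        field_simp]
      have : N ^ s / (N-1) ^ s ≤ 2 := by
        rw [div_le_iff₀ hp]; linarith
      nlinarith [mul_le_mul_of_nonneg_left this (show (0:ℝ) ≤ (N-1)*N by nlinarith)]
    calc Real.Gamma (N - s) * N ^ ((1:ℝ)+s)
        ≤ (Real.Gamma (N-1) * (N-1) ^ (1-s)) * N ^ ((1:ℝ)+s) := by
          apply mul_le_mul_of_nonneg_right hconv
          positivity
      _ = Real.Gamma (N-1) * ((N-1) ^ (1-s) * N ^ ((1:ℝ)+s)) := by ring
      _ ≤ Real.Gamma (N-1) * (2 * (N * (N-1))) := by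
          apply mul_le_mul_of_nonneg_left hkey hGN1.le
      _ = 2 * (N * ((N-1) * Real.Gamma (N-1))) := by ring
      _ = 2 * (Nat.factorial n : ℝ) := by rw [← hGam, ← hfact]
      _ ≤ (2*(Real.Gamma (1-s)+1)) * (Nat.factorial n : ℝ) := by
          have hG : 0 < Real.Gamma (1-s) := Real.Gamma_pos_of_pos (by linarith)
          have : (0:ℝ) ≤ (Nat.factorial n : ℝ) := by positivity
          nlinarith

theorem stirling_gamma_binomial_estimate (s : ℝ) (hs0 : 0 < s) (hs1 : s < 1) :
    ∃ C : ℝ, 0 < C ∧ ∀ n m : ℕ, 1 ≤ n →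
      Real.sqrt (((2*n + 2*m).choose (2*n) : ℝ)) * Real.Gamma ((n:ℝ) - s) *
          (Nat.factorial m : ℝ) / Real.Gamma ((n:ℝ) + (m:ℝ) + 1 - s) ≤
        C * (n:ℝ) ^ (-(3:ℝ)/4) * (1 + (m:ℝ)/(n:ℝ)) ^ s := by
  have hGs : 0 < Real.Gamma (1-s) := Real.Gamma_pos_of_pos (by linarith)
  set K : ℝ := 2*(Real.Gamma (1-s)+1) with hK
  have hKpos : 0 < K := by positivity
  refine ⟨4*K, by positivity, fun n m hn => ?_⟩
  have hN1 : (1:ℝ) ≤ (n:ℝ) := by exact_mod_cast hn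
  have hN0 : (0:ℝ) < (n:ℝ) := by linarith
  have hM0 : (0:ℝ) ≤ (m:ℝ) := Nat.cast_nonneg m
  set N : ℝ := (n:ℝ) with hNdef
  set M : ℝ := (m:ℝ)
  set X : ℝ := (((2*n + 2*m).choose (2*n) : ℕ) : ℝ) with hXdef
  set D : ℝ := (((n+m).choose n : ℕ) : ℝ) with hDdef
  have hX0 : 0 ≤ X := Nat.cast_nonneg _
  have hD0 : (0:ℝ) < D := by
    rw [hDdef]
    exact_mod_cast Nat.choose_pos (show n ≤ n + m by omega)
  have hG : 0 < Real.Gamma (N - s) := Real.Gamma_pos_of_pos (by simp; linarith)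
  have hGd : 0 < Real.Gamma (N + M + 1 - s) := Real.Gamma_pos_of_pos (by simp; linarith)
  -- Step 1: sqrt X ≤ 2 * N^(1/4) * D
  have hsq2 : X^2 ≤ 16 * N * D^4 := by
    rw [hXdef, hDdef, hNdef]
    exact_mod_cast aux_chooseSq n m hn
  have hq : (N ^ ((1:ℝ)/4))^2 = N ^ ((1:ℝ)/2) := by
    rw [← Real.rpow_natCast (N ^ ((1:ℝ)/4)) 2, ← Real.rpow_mul hN0.le]
    norm_num
  have hq2 : (N ^ ((1:ℝ)/2))^2 = N := by
    rw [← Real.rpow_natCast (N ^ ((1:ℝ)/2)) 2, ← Real.rpow_mul hN0.le]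
    norm_num
  have hq4pos : 0 < N ^ ((1:ℝ)/4) := Real.rpow_pos_of_pos hN0 _
  have hq2pos : 0 < N ^ ((1:ℝ)/2) := Real.rpow_pos_of_pos hN0 _
  have hXle : X ≤ 4 * N ^ ((1:ℝ)/2) * D^2 := by
    have hsq : X^2 ≤ (4 * N ^ ((1:ℝ)/2) * D^2)^2 := by
      calc X^2 ≤ 16 * N * D^4 := hsq2
        _ = (4 * N ^ ((1:ℝ)/2) * D^2)^2 := by rw [mul_pow, mul_pow, hq2]; ring
    exact le_of_pow_le_pow_left₀ two_ne_zero (by positivity) hsq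
  have h1 : Real.sqrt X ≤ 2 * N ^ ((1:ℝ)/4) * D := by
    calc Real.sqrt X ≤ Real.sqrt (4 * N ^ ((1:ℝ)/2) * D^2) := Real.sqrt_le_sqrt hXle
      _ = Real.sqrt ((2 * N ^ ((1:ℝ)/4) * D)^2) := by
          rw [mul_pow, mul_pow, hq]; ring_nf
      _ = 2 * N ^ ((1:ℝ)/4) * D := Real.sqrt_sq (by positivity)
  -- Step 2: factorial identity
  have h2 : D * (Nat.factorial n : ℝ) * (Nat.factorial m : ℝ) = (Nat.factorial (n+m) : ℝ) := by
    rw [hDdef]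
    exact_mod_cast Nat.add_sub_cancel_left (n := n) (m := m) ▸
      Nat.choose_mul_factorial_mul_factorial (show n ≤ n + m by omega)
  -- Step 3: (n+m)! ≤ Gd * (N+M+1)^s
  have h3 : (Nat.factorial (n+m) : ℝ) ≤ Real.Gamma (N+M+1-s) * (N+M+1) ^ s := by
    have hx : (0:ℝ) < N + M + 1 - s := by simp; linarith
    have hc := aux_gamma_conv hx hs0 hs1
    have harg : N + M + 1 - s + s = N + M + 1 := by ring
    rw [harg] at hc
    have hfac : Real.Gamma (N + M + 1) = (Nat.factorial (n+m) : ℝ) := by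
      have h := Real.Gamma_nat_eq_factorial (n+m)
      have e : ((n+m : ℕ) : ℝ) + 1 = N + M + 1 := by push_cast; ring
      rwa [e] at h
    refine hfac ▸ hc.trans (mul_le_mul_of_nonneg_left ?_ hGd.le)
    exact Real.rpow_le_rpow (by linarith) (by linarith) hs0.le
  -- Step 4: gamma ratio
  have h4 : Real.Gamma (N - s) * N ^ ((1:ℝ)+s) ≤ K * (Nat.factorial n : ℝ) :=
    aux_gamma_ratio s hs0 hs1 n hn
  have hfn : (0:ℝ) < (Nat.factorial n : ℝ) := by exact_mod_cast (Nat.factorial_pos n)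
  have hfm : (0:ℝ) < (Nat.factorial m : ℝ) := by exact_mod_cast (Nat.factorial_pos m)
  have hNs : 0 < N ^ ((1:ℝ)+s) := Real.rpow_pos_of_pos hN0 _
  have hAs : (0:ℝ) < (N+M) ^ s := Real.rpow_pos_of_pos (by linarith) _
  have hNspos : (0:ℝ) < N ^ s := Real.rpow_pos_of_pos hN0 _
  -- first reduction
  have hstep : Real.sqrt X * Real.Gamma (N - s) * (Nat.factorial m : ℝ) / Real.Gamma (N+M+1-s)
      ≤ (2 * N ^ ((1:ℝ)/4) * D) * Real.Gamma (N - s) * (Nat.factorial m : ℝ)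
          / Real.Gamma (N+M+1-s) := by
    exact (div_le_div_iff_of_pos_right hGd).2
      (mul_le_mul_of_nonneg_right (mul_le_mul_of_nonneg_right h1 hG.le) hfm.le)
  refine hstep.trans ?_
  rw [div_le_iff₀ hGd, ← mul_le_mul_iff_of_pos_right (show (0:ℝ) < (Nat.factorial n : ℝ) * N ^ ((1:ℝ)+s) by positivity)]
  have hA1 : (N+M+1) ^ s ≤ 2 * (N+M) ^ s := by
    calc (N+M+1) ^ s ≤ (2*(N+M)) ^ s :=
          Real.rpow_le_rpow (by linarith) (by linarith) hs0.le
      _ = 2 ^ s * (N+M) ^ s := Real.mul_rpow (by norm_num) (by linarith)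
      _ ≤ 2 * (N+M) ^ s := by
          have h2s : (2:ℝ) ^ s ≤ 2 ^ (1:ℝ) :=
            Real.rpow_le_rpow_of_exponent_le (by norm_num) hs1.le
          rw [Real.rpow_one] at h2s
          nlinarith
  calc (2 * N ^ ((1:ℝ)/4) * D) * Real.Gamma (N - s) * (Nat.factorial m : ℝ)
        * ((Nat.factorial n : ℝ) * N ^ ((1:ℝ)+s))
      = 2 * N ^ ((1:ℝ)/4) * (D * (Nat.factorial n : ℝ) * (Nat.factorial m : ℝ))
          * (Real.Gamma (N - s) * N ^ ((1:ℝ)+s)) := by ring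
    _ = 2 * N ^ ((1:ℝ)/4) * (Nat.factorial (n+m) : ℝ)
          * (Real.Gamma (N - s) * N ^ ((1:ℝ)+s)) := by rw [h2]
    _ ≤ 2 * N ^ ((1:ℝ)/4) * (Real.Gamma (N+M+1-s) * (N+M+1) ^ s)
          * (Real.Gamma (N - s) * N ^ ((1:ℝ)+s)) := by
        have e1 : (0:ℝ) ≤ 2 * N ^ ((1:ℝ)/4) := by positivity
        have hnn : (0:ℝ) ≤ Real.Gamma (N - s) * N ^ ((1:ℝ)+s) := by positivity
        exact mul_le_mul_of_nonneg_right (mul_le_mul_of_nonneg_left h3 e1) hnn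
    _ ≤ 2 * N ^ ((1:ℝ)/4) * (Real.Gamma (N+M+1-s) * (N+M+1) ^ s)
          * (K * (Nat.factorial n : ℝ)) := by
        have hnn2 : (0:ℝ) ≤ 2 * N ^ ((1:ℝ)/4) * (Real.Gamma (N+M+1-s) * (N+M+1) ^ s) := by
          have h5 : (0:ℝ) ≤ (N+M+1) ^ s := (Real.rpow_pos_of_pos (by linarith) s).le
          have h6 := hGd.le
          positivity
        exact mul_le_mul_of_nonneg_left h4 hnn2
    _ ≤ 2 * N ^ ((1:ℝ)/4) * (Real.Gamma (N+M+1-s) * (2 * (N+M) ^ s))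
          * (K * (Nat.factorial n : ℝ)) := by
        have hKf : (0:ℝ) ≤ K * (Nat.factorial n : ℝ) := by positivity
        refine mul_le_mul_of_nonneg_right ?_ hKf
        refine mul_le_mul_of_nonneg_left (mul_le_mul_of_nonneg_left hA1 hGd.le) (by positivity)
    _ = 4*K * (N ^ ((1:ℝ)/4) * (N+M) ^ s) * Real.Gamma (N+M+1-s)
          * (Nat.factorial n : ℝ) := by ring
    _ = 4*K * N ^ (-(3:ℝ)/4) * (1 + M/N) ^ s * Real.Gamma (N+M+1-s)
          * ((Nat.factorial n : ℝ) * N ^ ((1:ℝ)+s)) := by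
        have e1 : (1 + M/N) = (N+M)/N := by field_simp
        have e2 : ((N+M)/N) ^ s = (N+M) ^ s / N ^ s :=
          Real.div_rpow (show (0:ℝ) ≤ N+M by linarith) hN0.le s
        have e4 : (N+M)^s/N^s * (N^((1:ℝ)+s) * N^(-(3:ℝ)/4)) = N^((1:ℝ)/4) * (N+M)^s := by
          rw [← Real.rpow_add hN0]
          rw [show (1:ℝ)+s+(-(3:ℝ)/4) = (1:ℝ)/4 + s by ring, Real.rpow_add hN0]
          field_simp
        rw [e1, e2]
        linear_combination (-(4*K)*Real.Gamma (N+M+1-s)*(Nat.factorial n : ℝ)) * e4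
end

section
/- Let 0 < s < 1. There exists a constant C > 0 such that for every integer n ≥ 1, Σ_{k+l=n, k≥1, l≥0} (1 + l/k)^{2s}/(k^{3/2}·(2l + 3/2)^s) ≤ C·(2n + 3/2)^s, where the sum runs over all pairs of integers (k, l) with k ≥ 1, l ≥ 0 and k + l = n. -/
open Real

lemma dce_term_bound (s : ℝ) (hs0 : 0 < s) (hs1 : s < 1) (n k : ℕ)
    (hk1 : 1 ≤ k) (hkn : k ≤ n) :
    (1 + ((n - k : ℕ) : ℝ)/(k:ℝ)) ^ (2*s) /
      ((k:ℝ) ^ ((3:ℝ)/2) * (2*((n - k : ℕ):ℝ) + 3/2) ^ s) ≤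
    4 * (n:ℝ) ^ s * ((k:ℝ) ^ ((3:ℝ)/2))⁻¹ := by
  have hk0 : (0:ℝ) < k := by exact_mod_cast hk1
  have hn1 : 1 ≤ n := le_trans hk1 hkn
  have hn0 : (0:ℝ) < n := by exact_mod_cast lt_of_lt_of_le Nat.zero_lt_one hn1
  have hcast : ((n - k : ℕ) : ℝ) = (n:ℝ) - (k:ℝ) := by
    rw [Nat.cast_sub hkn]
  have hl0 : (0:ℝ) ≤ (n:ℝ) - (k:ℝ) := by
    have : (k:ℝ) ≤ n := by exact_mod_cast hkn
    linarith
  rw [hcast]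
  have h1 : 1 + ((n:ℝ) - k)/(k:ℝ) = (n:ℝ)/(k:ℝ) := by field_simp; ring
  rw [h1]
  have hdiv : ((n:ℝ)/(k:ℝ)) ^ (2*s) = (n:ℝ) ^ (2*s) / (k:ℝ) ^ (2*s) :=
    Real.div_rpow hn0.le hk0.le _
  have hk32 : (0:ℝ) < (k:ℝ) ^ ((3:ℝ)/2) := rpow_pos_of_pos hk0 _
  have hns0 : (0:ℝ) < (n:ℝ) ^ s := rpow_pos_of_pos hn0 _
  have hns1 : (1:ℝ) ≤ (n:ℝ) ^ s := Real.one_le_rpow (by exact_mod_cast hn1) hs0.le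
  have hbase : (0:ℝ) < 2*((n:ℝ) - k) + 3/2 := by linarith
  have hbase1 : (1:ℝ) ≤ 2*((n:ℝ) - k) + 3/2 := by linarith
  have hdenpos : (0:ℝ) < (2*((n:ℝ) - k) + 3/2) ^ s := rpow_pos_of_pos hbase _
  rw [div_le_iff₀ (by positivity)]
  by_cases h : (n:ℝ) ≤ 2*((n:ℝ) - k) + 3/2
  · -- large l case: (2l+3/2)^s ≥ n^s
    have hns : (n:ℝ) ^ s ≤ (2*((n:ℝ) - k) + 3/2) ^ s :=
      Real.rpow_le_rpow hn0.le h hs0.le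
    have hn2s : (n:ℝ) ^ (2*s) = (n:ℝ) ^ s * (n:ℝ) ^ s := by
      rw [← Real.rpow_add hn0]; ring_nf
    have hk2s : (1:ℝ) ≤ (k:ℝ) ^ (2*s) :=
      Real.one_le_rpow (by exact_mod_cast hk1) (by positivity)
    have : ((n:ℝ)/(k:ℝ)) ^ (2*s) ≤ (n:ℝ) ^ s * (n:ℝ) ^ s := by
      rw [hdiv, hn2s]
      calc (n:ℝ) ^ s * (n:ℝ) ^ s / (k:ℝ) ^ (2*s)
          ≤ (n:ℝ) ^ s * (n:ℝ) ^ s / 1 := by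
            apply div_le_div_of_nonneg_left (by positivity) one_pos hk2s
        _ = (n:ℝ) ^ s * (n:ℝ) ^ s := by ring
    calc ((n:ℝ)/(k:ℝ)) ^ (2*s) ≤ (n:ℝ) ^ s * (n:ℝ) ^ s := this
      _ ≤ (n:ℝ) ^ s * (2*((n:ℝ) - k) + 3/2) ^ s := by
          apply mul_le_mul_of_nonneg_left hns hns0.le
      _ ≤ 4 * (n:ℝ) ^ s * ((k:ℝ) ^ ((3:ℝ)/2))⁻¹ *
            ((k:ℝ) ^ ((3:ℝ)/2) * (2*((n:ℝ) - k) + 3/2) ^ s) := by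
          have : 4 * (n:ℝ) ^ s * ((k:ℝ) ^ ((3:ℝ)/2))⁻¹ *
              ((k:ℝ) ^ ((3:ℝ)/2) * (2*((n:ℝ) - k) + 3/2) ^ s)
              = 4 * ((n:ℝ) ^ s * (2*((n:ℝ) - k) + 3/2) ^ s) := by
            field_simp
          rw [this]
          nlinarith [mul_pos hns0 hdenpos]
  · -- small l case: n/k < 2
    push_neg at h
    have hnk2 : (n:ℝ)/(k:ℝ) ≤ 2 := by
      rw [div_le_iff₀ hk0]; linarith
    have h4 : ((n:ℝ)/(k:ℝ)) ^ (2*s) ≤ 4 := by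
      calc ((n:ℝ)/(k:ℝ)) ^ (2*s) ≤ (2:ℝ) ^ (2*s) :=
            Real.rpow_le_rpow (by positivity) hnk2 (by positivity)
        _ ≤ (2:ℝ) ^ (2:ℝ) := Real.rpow_le_rpow_of_exponent_le one_le_two (by linarith)
        _ = 4 := by
            rw [show (2:ℝ) = ((2:ℕ):ℝ) by norm_num, Real.rpow_natCast]; norm_num
    have hden1 : (1:ℝ) ≤ (2*((n:ℝ) - k) + 3/2) ^ s :=
      Real.one_le_rpow hbase1 hs0.le
    calc ((n:ℝ)/(k:ℝ)) ^ (2*s) ≤ 4 := h4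
      _ ≤ 4 * ((n:ℝ) ^ s * (2*((n:ℝ) - k) + 3/2) ^ s) := by
          nlinarith [mul_le_mul hns1 hden1 zero_le_one hns0.le]
      _ = 4 * (n:ℝ) ^ s * ((k:ℝ) ^ ((3:ℝ)/2))⁻¹ *
            ((k:ℝ) ^ ((3:ℝ)/2) * (2*((n:ℝ) - k) + 3/2) ^ s) := by
          field_simp

theorem discrete_convolution_estimate (s : ℝ) (hs0 : 0 < s) (hs1 : s < 1) :
    ∃ C : ℝ, 0 < C ∧ ∀ n : ℕ, 1 ≤ n →
      ∑ k ∈ Finset.Icc 1 n,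
          (1 + ((n - k : ℕ) : ℝ)/(k:ℝ)) ^ (2*s) /
            ((k:ℝ) ^ ((3:ℝ)/2) * (2*((n - k : ℕ):ℝ) + 3/2) ^ s) ≤
        C * (2*(n:ℝ) + 3/2) ^ s := by
  have hsum : Summable (fun k : ℕ => ((k:ℝ) ^ ((3:ℝ)/2))⁻¹) :=
    Real.summable_nat_rpow_inv.2 (by norm_num)
  set T := ∑' k : ℕ, ((k:ℝ) ^ ((3:ℝ)/2))⁻¹ with hTdef
  have hT : 0 ≤ T := tsum_nonneg fun k => by positivity
  refine ⟨4*(T+1), by positivity, ?_⟩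
  intro n hn
  have hn0 : (0:ℝ) < n := by exact_mod_cast lt_of_lt_of_le Nat.zero_lt_one hn
  have hns0 : (0:ℝ) ≤ (n:ℝ) ^ s := (rpow_pos_of_pos hn0 _).le
  have step1 : ∑ k ∈ Finset.Icc 1 n,
      (1 + ((n - k : ℕ) : ℝ)/(k:ℝ)) ^ (2*s) /
        ((k:ℝ) ^ ((3:ℝ)/2) * (2*((n - k : ℕ):ℝ) + 3/2) ^ s) ≤
      ∑ k ∈ Finset.Icc 1 n, 4 * (n:ℝ) ^ s * ((k:ℝ) ^ ((3:ℝ)/2))⁻¹ := by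
    apply Finset.sum_le_sum
    intro k hk
    rw [Finset.mem_Icc] at hk
    exact dce_term_bound s hs0 hs1 n k hk.1 hk.2
  have step2 : ∑ k ∈ Finset.Icc 1 n, 4 * (n:ℝ) ^ s * ((k:ℝ) ^ ((3:ℝ)/2))⁻¹
      = 4 * (n:ℝ) ^ s * ∑ k ∈ Finset.Icc 1 n, ((k:ℝ) ^ ((3:ℝ)/2))⁻¹ := by
    rw [Finset.mul_sum]
  have step3 : ∑ k ∈ Finset.Icc 1 n, ((k:ℝ) ^ ((3:ℝ)/2))⁻¹ ≤ T :=
    Summable.sum_le_tsum _ (fun k _ => by positivity) hsum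
  have hpow : (n:ℝ) ^ s ≤ (2*(n:ℝ) + 3/2) ^ s :=
    Real.rpow_le_rpow hn0.le (by linarith) hs0.le
  have hpow0 : (0:ℝ) ≤ (2*(n:ℝ) + 3/2) ^ s := by positivity
  calc ∑ k ∈ Finset.Icc 1 n,
      (1 + ((n - k : ℕ) : ℝ)/(k:ℝ)) ^ (2*s) /
        ((k:ℝ) ^ ((3:ℝ)/2) * (2*((n - k : ℕ):ℝ) + 3/2) ^ s)
      ≤ 4 * (n:ℝ) ^ s * ∑ k ∈ Finset.Icc 1 n, ((k:ℝ) ^ ((3:ℝ)/2))⁻¹ := by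
        rw [← step2]; exact step1
    _ ≤ 4 * (n:ℝ) ^ s * T := by
        apply mul_le_mul_of_nonneg_left step3 (by positivity)
    _ ≤ 4*(T+1) * (2*(n:ℝ) + 3/2) ^ s := by
        nlinarith [mul_le_mul_of_nonneg_left hpow (show (0:ℝ) ≤ 4*T by linarith)]
end

section
/- Let 0 < s < 1. There exists a constant C > 0 such that for all sequences of nonnegative reals (f_k)_{k≥0}, (g_l)_{l≥0}, (h_n)_{n≥0}, one has Σ_{k≥1, l≥0} (1 + l/k)^s·k^{−3/4}·f_k·g_l·h_{k+l} ≤ C·(Σ_{k≥0} f_k²)^{1/2}·(Σ_{l≥0} (2l + 3/2)^s·g_l²)^{1/2}·(Σ_{n≥0} (2n + 3/2)^s·h_n²)^{1/2}, where the left-hand double sum runs over all integers k ≥ 1 and l ≥ 0 (with value +∞ allowed if divergent, the inequality holding in [0, +∞]). -/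
open Real

open MeasureTheory in
private lemma cs_tsum_ennreal (a b : ℕ → ENNReal) :
    ∑' n, a n * b n ≤ (∑' n, a n ^ 2) ^ ((1:ℝ)/2) * (∑' n, b n ^ 2) ^ ((1:ℝ)/2) := by
  have hpq : Real.HolderConjugate 2 2 := Real.HolderConjugate.two_two
  have h := ENNReal.lintegral_mul_le_Lp_mul_Lq (Measure.count : Measure ℕ) hpq
    (measurable_of_countable a).aemeasurable (measurable_of_countable b).aemeasurable
  simp only [Pi.mul_apply, MeasureTheory.lintegral_count] at h
  have e : ∀ x : ENNReal, x ^ (2:ℝ) = x ^ 2 := fun x => by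
    rw [← ENNReal.rpow_natCast x 2]; norm_num
  simp_rw [e] at h
  exact h

private lemma sq_rpow_half {x : ℝ} (hx : 0 ≤ x) (s : ℝ) : (x ^ (s/2)) ^ 2 = x ^ s := by
  rw [← Real.rpow_natCast (x ^ (s/2)) 2, ← Real.rpow_mul hx]
  norm_num

private lemma kernel_bound (s : ℝ) (hs0 : 0 < s) {K L : ℝ} (hK : 1 ≤ K) (hL : 0 ≤ L) :
    (1 + L/K) ^ s * K ^ (-(3:ℝ)/4) ≤
      K ^ (-(s/2 + 3/4)) * ((2*L + 3/2) ^ (s/2) * (2*(K+L) + 3/2) ^ (s/2)) := by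
  have hK0 : (0:ℝ) < K := lt_of_lt_of_le one_pos hK
  have h1 : (0:ℝ) ≤ 1 + L/K := by positivity
  have hA : (0:ℝ) ≤ 2*L + 3/2 := by linarith
  have hB : (0:ℝ) ≤ 2*(K+L) + 3/2 := by linarith
  have key : (K+L)^2 ≤ K * ((2*L + 3/2) * (2*(K+L) + 3/2)) := by
    nlinarith [mul_nonneg (sub_nonneg.2 hK) (mul_nonneg hL hL), mul_nonneg hL hL,
      mul_nonneg hK0.le hL, mul_nonneg (sub_nonneg.2 hK) hL]
  have base : (1 + L/K)^2 ≤ K⁻¹ * ((2*L + 3/2) * (2*(K+L) + 3/2)) := by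
    have e : 1 + L/K = (K+L)/K := by field_simp
    rw [e, div_pow, div_le_iff₀ (by positivity)]
    calc (K+L)^2 ≤ K * ((2*L + 3/2) * (2*(K+L) + 3/2)) := key
      _ = K⁻¹ * ((2*L + 3/2) * (2*(K+L) + 3/2)) * K^2 := by field_simp
  have e1 : ((1 + L/K)^2 : ℝ) ^ (s/2) = (1 + L/K) ^ s := by
    rw [← Real.rpow_natCast (1 + L/K) 2, ← Real.rpow_mul h1]
    congr 1
    push_cast; ring
  have h2 : (1 + L/K) ^ s ≤ (K⁻¹ * ((2*L + 3/2) * (2*(K+L) + 3/2))) ^ (s/2) := by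
    rw [← e1]
    exact Real.rpow_le_rpow (by positivity) base (by positivity)
  have e2 : (K⁻¹ * ((2*L + 3/2) * (2*(K+L) + 3/2))) ^ (s/2)
      = K ^ (-(s/2)) * ((2*L + 3/2) ^ (s/2) * (2*(K+L) + 3/2) ^ (s/2)) := by
    rw [Real.mul_rpow (inv_nonneg.2 hK0.le) (mul_nonneg hA hB), Real.mul_rpow hA hB,
      Real.inv_rpow hK0.le, ← Real.rpow_neg hK0.le]
  calc (1 + L/K) ^ s * K ^ (-(3:ℝ)/4)
      ≤ (K ^ (-(s/2)) * ((2*L + 3/2) ^ (s/2) * (2*(K+L) + 3/2) ^ (s/2))) * K ^ (-(3:ℝ)/4) := by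
        apply mul_le_mul_of_nonneg_right _ (by positivity)
        rw [← e2]; exact h2
    _ = K ^ (-(s/2 + 3/4)) * ((2*L + 3/2) ^ (s/2) * (2*(K+L) + 3/2) ^ (s/2)) := by
        rw [mul_right_comm, ← Real.rpow_add hK0,
          show -(s/2) + (-(3:ℝ)/4) = -(s/2 + 3/4) by ring]

theorem trilinear_discrete_convolution_estimate (s : ℝ) (hs0 : 0 < s) (hs1 : s < 1) :
    ∃ C : ℝ, 0 < C ∧ ∀ f g h : ℕ → ℝ,
      (∀ k, 0 ≤ f k) → (∀ l, 0 ≤ g l) → (∀ n, 0 ≤ h n) →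
      (∑' (k : ℕ), ∑' (l : ℕ),
          ENNReal.ofReal ((1 + (l:ℝ)/((k:ℝ)+1)) ^ s * ((k:ℝ)+1) ^ (-(3:ℝ)/4) *
            f (k+1) * g l * h (k+1+l))) ≤
        ENNReal.ofReal C *
          (∑' (k : ℕ), ENNReal.ofReal (f k ^ 2)) ^ ((1:ℝ)/2) *
          (∑' (l : ℕ), ENNReal.ofReal ((2*(l:ℝ) + 3/2) ^ s * g l ^ 2)) ^ ((1:ℝ)/2) *
          (∑' (n : ℕ), ENNReal.ofReal ((2*(n:ℝ) + 3/2) ^ s * h n ^ 2)) ^ ((1:ℝ)/2) := by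
  have hs2 : (1:ℝ) < s + 3/2 := by linarith
  have hsum : Summable (fun k : ℕ => ((k:ℝ)+1) ^ (-(s + 3/2))) := by
    have h0 : Summable (fun n : ℕ => ((n:ℝ) ^ (s + 3/2))⁻¹) := Real.summable_nat_rpow_inv.mpr hs2
    refine (h0.comp_injective Nat.succ_injective).congr fun k => ?_
    rw [Function.comp_apply, ← Real.rpow_neg (by positivity)]
    congr 1
    push_cast; ring
  set C0 : ℝ := ∑' k : ℕ, ((k:ℝ)+1) ^ (-(s + 3/2)) with hC0def
  have hC0 : 0 < C0 := Summable.tsum_pos hsum (fun i => by positivity) 0 (by positivity)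
  refine ⟨C0 ^ ((1:ℝ)/2), Real.rpow_pos_of_pos hC0 _, fun f g h hf hg hh => ?_⟩
  -- shorthand weights
  set G : ℕ → ℝ := fun l => (2*(l:ℝ) + 3/2) ^ (s/2) * g l with hGdef
  set H : ℕ → ℝ := fun n => (2*(n:ℝ) + 3/2) ^ (s/2) * h n with hHdef
  set w : ℕ → ℝ := fun k => ((k:ℝ)+1) ^ (-(s/2 + 3/4)) with hwdef
  have hGnn : ∀ l, 0 ≤ G l := fun l => mul_nonneg (by positivity) (hg l)
  have hHnn : ∀ n, 0 ≤ H n := fun n => mul_nonneg (by positivity) (hh n)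
  have hwnn : ∀ k, 0 ≤ w k := fun k => by positivity
  set SF := ∑' (k : ℕ), ENNReal.ofReal (f k ^ 2) with hSF
  set SG := ∑' (l : ℕ), ENNReal.ofReal ((2*(l:ℝ) + 3/2) ^ s * g l ^ 2) with hSG
  set SH := ∑' (n : ℕ), ENNReal.ofReal ((2*(n:ℝ) + 3/2) ^ s * h n ^ 2) with hSH
  have hG2 : ∀ l : ℕ, ENNReal.ofReal (G l) ^ 2
      = ENNReal.ofReal ((2*(l:ℝ) + 3/2) ^ s * g l ^ 2) := by
    intro l
    rw [← ENNReal.ofReal_pow (hGnn l)]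
    congr 1
    rw [hGdef]
    simp only
    rw [mul_pow, sq_rpow_half (by positivity) s]
  have hH2 : ∀ n : ℕ, ENNReal.ofReal (H n) ^ 2
      = ENNReal.ofReal ((2*(n:ℝ) + 3/2) ^ s * h n ^ 2) := by
    intro n
    rw [← ENNReal.ofReal_pow (hHnn n)]
    congr 1
    rw [hHdef]
    simp only
    rw [mul_pow, sq_rpow_half (by positivity) s]
  -- Step B : Cauchy-Schwarz in l for fixed k
  have hBk : ∀ k : ℕ, ∑' l : ℕ, ENNReal.ofReal (G l) * ENNReal.ofReal (H (k+1+l))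
      ≤ SG ^ ((1:ℝ)/2) * SH ^ ((1:ℝ)/2) := by
    intro k
    refine le_trans (cs_tsum_ennreal _ _) (mul_le_mul' ?_ ?_)
    · exact ENNReal.rpow_le_rpow (le_of_eq (tsum_congr hG2)) (by norm_num)
    · refine ENNReal.rpow_le_rpow ?_ (by norm_num)
      calc ∑' l : ℕ, ENNReal.ofReal (H (k+1+l)) ^ 2
          ≤ ∑' n : ℕ, ENNReal.ofReal (H n) ^ 2 :=
            ENNReal.tsum_comp_le_tsum_of_injective (f := fun l : ℕ => k+1+l)
              (fun a b hab => by simpa using hab) (fun n => ENNReal.ofReal (H n) ^ 2)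
        _ = SH := tsum_congr hH2
  -- Step A : pointwise bound
  have hAkl : ∀ k l : ℕ,
      ENNReal.ofReal ((1 + (l:ℝ)/((k:ℝ)+1)) ^ s * ((k:ℝ)+1) ^ (-(3:ℝ)/4) *
        f (k+1) * g l * h (k+1+l))
      ≤ ENNReal.ofReal (w k * f (k+1)) * (ENNReal.ofReal (G l) * ENNReal.ofReal (H (k+1+l))) := by
    intro k l
    rw [← ENNReal.ofReal_mul (hGnn l), ← ENNReal.ofReal_mul (mul_nonneg (hwnn k) (hf _))]
    apply ENNReal.ofReal_le_ofReal
    have hK1 : (1:ℝ) ≤ (k:ℝ)+1 := by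
      have : (0:ℝ) ≤ (k:ℝ) := Nat.cast_nonneg k
      linarith
    have hker := kernel_bound s hs0 hK1 (Nat.cast_nonneg l)
    calc (1 + (l:ℝ)/((k:ℝ)+1)) ^ s * ((k:ℝ)+1) ^ (-(3:ℝ)/4) * f (k+1) * g l * h (k+1+l)
        = ((1 + (l:ℝ)/((k:ℝ)+1)) ^ s * ((k:ℝ)+1) ^ (-(3:ℝ)/4)) *
            (f (k+1) * g l * h (k+1+l)) := by ring
      _ ≤ (((k:ℝ)+1) ^ (-(s/2 + 3/4)) *
            ((2*(l:ℝ) + 3/2) ^ (s/2) * (2*(((k:ℝ)+1)+(l:ℝ)) + 3/2) ^ (s/2))) *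
            (f (k+1) * g l * h (k+1+l)) := by
          apply mul_le_mul_of_nonneg_right hker
          exact mul_nonneg (mul_nonneg (hf _) (hg _)) (hh _)
      _ = w k * f (k+1) * (G l * H (k+1+l)) := by
          rw [hwdef, hGdef, hHdef]
          simp only
          push_cast
          ring
  -- Step C : sum over k
  have hC : ∑' k : ℕ, ENNReal.ofReal (w k * f (k+1))
      ≤ ENNReal.ofReal (C0 ^ ((1:ℝ)/2)) * SF ^ ((1:ℝ)/2) := by
    have e0 : ∀ k : ℕ, ENNReal.ofReal (w k * f (k+1))
        = ENNReal.ofReal (w k) * ENNReal.ofReal (f (k+1)) :=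
      fun k => ENNReal.ofReal_mul (hwnn k)
    rw [tsum_congr e0]
    refine le_trans (cs_tsum_ennreal _ _) (mul_le_mul' ?_ ?_)
    · have ew : ∀ k : ℕ, ENNReal.ofReal (w k) ^ 2 = ENNReal.ofReal (((k:ℝ)+1) ^ (-(s + 3/2))) := by
        intro k
        rw [← ENNReal.ofReal_pow (hwnn k)]
        congr 1
        rw [hwdef]
        simp only
        rw [← Real.rpow_natCast (((k:ℝ)+1) ^ (-(s/2 + 3/4))) 2,
          ← Real.rpow_mul (by positivity)]
        congr 1
        push_cast; ring
      rw [tsum_congr ew, ← ENNReal.ofReal_tsum_of_nonneg (fun k => by positivity) hsum,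
        ← ENNReal.ofReal_rpow_of_nonneg hC0.le (by norm_num : (0:ℝ) ≤ (1:ℝ)/2)]
    · refine ENNReal.rpow_le_rpow ?_ (by norm_num)
      calc ∑' k : ℕ, ENNReal.ofReal (f (k+1)) ^ 2
          = ∑' k : ℕ, ENNReal.ofReal (f (k+1) ^ 2) := by
            refine tsum_congr fun k => ?_
            rw [← ENNReal.ofReal_pow (hf _)]
        _ ≤ ∑' k : ℕ, ENNReal.ofReal (f k ^ 2) :=
            ENNReal.tsum_comp_le_tsum_of_injective (f := fun k : ℕ => k+1)
              (fun a b hab => by simpa using hab) (fun k => ENNReal.ofReal (f k ^ 2))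
        _ = SF := hSF.symm
  -- assembly
  calc ∑' (k : ℕ), ∑' (l : ℕ),
        ENNReal.ofReal ((1 + (l:ℝ)/((k:ℝ)+1)) ^ s * ((k:ℝ)+1) ^ (-(3:ℝ)/4) *
          f (k+1) * g l * h (k+1+l))
      ≤ ∑' (k : ℕ), ∑' (l : ℕ),
          ENNReal.ofReal (w k * f (k+1)) *
            (ENNReal.ofReal (G l) * ENNReal.ofReal (H (k+1+l))) :=
        ENNReal.tsum_le_tsum fun k => ENNReal.tsum_le_tsum fun l => hAkl k l
    _ = ∑' (k : ℕ), ENNReal.ofReal (w k * f (k+1)) *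
          ∑' (l : ℕ), ENNReal.ofReal (G l) * ENNReal.ofReal (H (k+1+l)) := by
        simp_rw [ENNReal.tsum_mul_left]
    _ ≤ ∑' (k : ℕ), ENNReal.ofReal (w k * f (k+1)) * (SG ^ ((1:ℝ)/2) * SH ^ ((1:ℝ)/2)) :=
        ENNReal.tsum_le_tsum fun k => mul_le_mul_right (hBk k) _
    _ = (∑' (k : ℕ), ENNReal.ofReal (w k * f (k+1))) * (SG ^ ((1:ℝ)/2) * SH ^ ((1:ℝ)/2)) :=
        ENNReal.tsum_mul_right
    _ ≤ (ENNReal.ofReal (C0 ^ ((1:ℝ)/2)) * SF ^ ((1:ℝ)/2)) *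
          (SG ^ ((1:ℝ)/2) * SH ^ ((1:ℝ)/2)) := mul_le_mul_left hC _
    _ = ENNReal.ofReal (C0 ^ ((1:ℝ)/2)) * SF ^ ((1:ℝ)/2) * SG ^ ((1:ℝ)/2) * SH ^ ((1:ℝ)/2) := by
        ring
end

section
/- Let 0 < s < 1 and let β : ℝ → ℝ be a measurable function such that for some constant c > 0 one has c·|θ|^(−1−2s) ≤ β(θ) ≤ c⁻¹·|θ|^(−1−2s) for all θ ∈ [−π/4, π/4] \ {0}. For each integer n ≥ 1 set λ_{2n} = ∫_{−π/4}^{π/4} β(θ)·(1 − (cos θ)^{2n} − (sin θ)^{2n}) dθ. Then there exists a constant C ≥ 1 such that for every integer k ≥ 2, C⁻¹·k^s ≤ λ_{2k} ≤ C·k^s. -/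
open Real MeasureTheory

-- f_k nonneg and upper bound
lemma aux_f_nonneg (k : ℕ) (hk : 1 ≤ k) (θ : ℝ) :
    0 ≤ 1 - Real.cos θ ^ (2*k) - Real.sin θ ^ (2*k) := by
  have h1 : Real.cos θ ^ (2*k) = (Real.cos θ ^ 2) ^ k := by rw [pow_mul]
  have h2 : Real.sin θ ^ (2*k) = (Real.sin θ ^ 2) ^ k := by rw [pow_mul]
  have hc2 : Real.cos θ ^ 2 ≤ 1 := Real.cos_sq_le_one θ
  have hs2 : Real.sin θ ^ 2 ≤ 1 := Real.sin_sq_le_one θ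
  have hc0 : (0:ℝ) ≤ Real.cos θ ^ 2 := sq_nonneg _
  have hs0 : (0:ℝ) ≤ Real.sin θ ^ 2 := sq_nonneg _
  have hck : (Real.cos θ ^ 2) ^ k ≤ Real.cos θ ^ 2 := pow_le_of_le_one hc0 hc2 (by omega)
  have hsk : (Real.sin θ ^ 2) ^ k ≤ Real.sin θ ^ 2 := pow_le_of_le_one hs0 hs2 (by omega)
  have := Real.sin_sq_add_cos_sq θ
  rw [h1, h2]; linarith

lemma aux_f_le (k : ℕ) (θ : ℝ) :
    1 - Real.cos θ ^ (2*k) - Real.sin θ ^ (2*k) ≤ k * θ^2 := by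
  have h1 : Real.cos θ ^ (2*k) = (Real.cos θ ^ 2) ^ k := by rw [pow_mul]
  have hs0 : (0:ℝ) ≤ Real.sin θ ^ (2*k) := by rw [pow_mul]; positivity
  have hb : 1 + (k:ℝ) * (Real.cos θ ^ 2 - 1) ≤ (Real.cos θ ^ 2) ^ k := by
    have := one_add_mul_le_pow (a := Real.cos θ ^ 2 - 1) (by nlinarith [sq_nonneg (Real.cos θ)]) k
    simpa using this
  have hsin : Real.sin θ ^ 2 ≤ θ ^ 2 := Real.sin_sq_le_sq
  have hpy := Real.sin_sq_add_cos_sq θ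
  rw [h1]
  nlinarith [Nat.cast_nonneg (α := ℝ) k]

lemma aux_f_ge (k : ℕ) (hk : 2 ≤ k) (θ : ℝ)
    (hθa : ((k:ℝ))^(-(2:ℝ)⁻¹) ≤ θ) (hθb : θ ≤ π/4) :
    (12 - π^2)/(4*(π^2+4)) ≤ 1 - Real.cos θ ^ (2*k) - Real.sin θ ^ (2*k) := by
  have hπ := Real.pi_pos
  have hk0 : (0:ℝ) < k := by positivity
  have ha0 : (0:ℝ) < ((k:ℝ))^(-(2:ℝ)⁻¹) := Real.rpow_pos_of_pos hk0 _
  have hθ0 : 0 < θ := lt_of_lt_of_le ha0 hθa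
  set u := Real.sin θ ^ 2 with hu
  have hu0 : 0 ≤ u := sq_nonneg _
  have hu1 : u ≤ 1 := Real.sin_sq_le_one θ
  -- θ² ≥ 1/k
  have hθsq : (k:ℝ)⁻¹ ≤ θ ^ 2 := by
    have h2 : (((k:ℝ))^(-(2:ℝ)⁻¹))^2 ≤ θ^2 := by
      apply pow_le_pow_left₀ ha0.le hθa
    calc (k:ℝ)⁻¹ = ((k:ℝ))^(-(2:ℝ)⁻¹ * 2) := by
            rw [show (-(2:ℝ)⁻¹ * 2) = (-1 : ℝ) by norm_num, Real.rpow_neg_one]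
      _ = (((k:ℝ))^(-(2:ℝ)⁻¹))^(2:ℕ) := by
            rw [← Real.rpow_natCast (((k:ℝ))^(-(2:ℝ)⁻¹)) 2, ← Real.rpow_mul hk0.le]
            norm_num
      _ ≤ θ^2 := h2
  -- sin θ ≥ 2/π θ
  have hsin : 2 / π * θ ≤ Real.sin θ := Real.mul_le_sin hθ0.le (by linarith)
  have husq : 4 / π^2 * θ^2 ≤ u := by
    have h := pow_le_pow_left₀ (by positivity) hsin 2
    have he : (2/π*θ)^2 = 4/π^2*θ^2 := by rw [mul_pow, div_pow]; norm_num
    rw [he] at h; exact h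
  have hku : 4 / π^2 ≤ (k:ℝ) * u := by
    have h1 : 4 / π^2 * ((k:ℝ) * θ^2) ≤ (k:ℝ) * u := by
      have := mul_le_mul_of_nonneg_left husq hk0.le
      nlinarith
    have h2 : (1:ℝ) ≤ (k:ℝ) * θ^2 := by
      have := mul_le_mul_of_nonneg_left hθsq hk0.le
      rw [mul_inv_cancel₀ (ne_of_gt hk0)] at this
      linarith
    nlinarith [sq_nonneg π, div_nonneg (by norm_num : (0:ℝ) ≤ 4) (sq_nonneg π)]
  -- cos^{2k} = (1-u)^k ≤ 1/(1+ku) ≤ π²/(π²+4)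
  have hcos_eq : Real.cos θ ^ (2*k) = (1 - u) ^ k := by
    rw [pow_mul, Real.cos_sq']
  have hbern : 1 + (k:ℝ) * u ≤ (1+u)^k := by
    have := one_add_mul_le_pow (a := u) (by linarith) k
    simpa using this
  have hprod : (1-u)^k * (1+u)^k ≤ 1 := by
    rw [← mul_pow]
    apply pow_le_one₀ (by nlinarith) (by nlinarith)
  have h1u0 : (0:ℝ) ≤ (1-u)^k := pow_nonneg (by linarith) k
  have hcosk : (1-u)^k ≤ π^2/(π^2+4) := by
    have hd : 0 < 1 + (k:ℝ)*u := by nlinarith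
    have h3 : (1-u)^k * (1 + (k:ℝ)*u) ≤ 1 := by
      calc (1-u)^k * (1 + (k:ℝ)*u) ≤ (1-u)^k * (1+u)^k :=
            mul_le_mul_of_nonneg_left hbern h1u0
        _ ≤ 1 := hprod
    have h4 : (1-u)^k ≤ 1/(1 + (k:ℝ)*u) := by
      rw [le_div_iff₀ hd]; exact h3
    have h5 : (1:ℝ)/(1 + (k:ℝ)*u) ≤ π^2/(π^2+4) := by
      rw [div_le_div_iff₀ hd (by positivity)]
      have : π^2 * (4/π^2) ≤ π^2 * ((k:ℝ)*u) :=
        mul_le_mul_of_nonneg_left hku (sq_nonneg π)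
      rw [mul_div_cancel₀ _ (by positivity)] at this
      nlinarith
    linarith
  -- sin^{2k} = u^k ≤ 1/4
  have hu_half : u ≤ 1/2 := by
    have hc2 : 0 ≤ Real.cos (2*θ) := by
      apply Real.cos_nonneg_of_mem_Icc
      constructor <;> [linarith; linarith]
    have h2m := Real.cos_two_mul θ
    have hsq := Real.sin_sq θ
    linarith
  have hsink : Real.sin θ ^ (2*k) ≤ 1/4 := by
    have h1 : Real.sin θ ^ (2*k) = u ^ k := by rw [pow_mul]
    have h2 : u ^ k ≤ (1/2:ℝ)^k := pow_le_pow_left₀ hu0 hu_half k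
    have h3 : (1/2:ℝ)^k ≤ (1/2:ℝ)^2 :=
      pow_le_pow_of_le_one (by norm_num) (by norm_num) hk
    norm_num at h3
    rw [h1]; linarith
  have key : (12 - π^2)/(4*(π^2+4)) = 1 - π^2/(π^2+4) - 1/4 := by
    have hπ4 : (0:ℝ) < π^2 + 4 := by positivity
    field_simp
    ring
  rw [hcos_eq, key]
  linarith

lemma aux_intable_abs_rpow {r : ℝ} (hr : -1 < r) {b : ℝ} (hb : 0 ≤ b) :
    IntervalIntegrable (fun x : ℝ => |x| ^ r) volume (-b) b := by
  have h1 : IntervalIntegrable (fun x : ℝ => x ^ r) volume 0 b :=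
    intervalIntegral.intervalIntegrable_rpow' hr
  have h2 : IntervalIntegrable (fun x : ℝ => |x| ^ r) volume 0 b := by
    rw [intervalIntegrable_iff] at h1 ⊢
    apply h1.congr_fun ?_ measurableSet_uIoc
    intro x hx
    rw [Set.uIoc_of_le hb] at hx
    simp only [abs_of_pos hx.1]
  have h3 : IntervalIntegrable (fun x : ℝ => |x| ^ r) volume (-b) 0 := by
    have := (IntervalIntegrable.iff_comp_neg (by simp)).mp h2
    simp only [abs_neg, neg_zero] at this
    exact this.symm
  exact h3.trans h2

lemma aux_integral_abs_rpow {r : ℝ} (hr : -1 < r) {b : ℝ} (hb : 0 ≤ b) :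
    ∫ x in (-b)..b, |x| ^ r = 2 * b ^ (r+1) / (r+1) := by
  have hr1 : r + 1 ≠ 0 := by linarith
  have h0b : ∫ x in (0:ℝ)..b, |x| ^ r = b^(r+1)/(r+1) := by
    have he : ∫ x in (0:ℝ)..b, |x| ^ r = ∫ x in (0:ℝ)..b, x ^ r := by
      apply intervalIntegral.integral_congr
      intro x hx
      rw [Set.uIcc_of_le hb] at hx
      simp only [abs_of_nonneg hx.1]
    rw [he, integral_rpow (Or.inl hr), Real.zero_rpow hr1, sub_zero]
  have hneg : ∫ x in (-b)..(0:ℝ), |x| ^ r = b^(r+1)/(r+1) := by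
    have := intervalIntegral.integral_comp_neg (a := (0:ℝ)) (b := b) (fun x => |x| ^ r)
    simp only [abs_neg, neg_zero] at this
    rw [← this, h0b]
  have i1 : IntervalIntegrable (fun x : ℝ => |x| ^ r) volume (-b) 0 :=
    (aux_intable_abs_rpow hr hb).mono_set (by
      rw [Set.uIcc_of_le (by linarith : -b ≤ (0:ℝ)), Set.uIcc_of_le (by linarith : -b ≤ b)]
      exact Set.Icc_subset_Icc le_rfl hb)
  have i2 : IntervalIntegrable (fun x : ℝ => |x| ^ r) volume 0 b :=
    (aux_intable_abs_rpow hr hb).mono_set (by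
      rw [Set.uIcc_of_le hb, Set.uIcc_of_le (by linarith : -b ≤ b)]
      exact Set.Icc_subset_Icc (by linarith) le_rfl)
  rw [← intervalIntegral.integral_add_adjacent_intervals i1 i2, h0b, hneg]
  ring

set_option maxHeartbeats 2000000 in
lemma aux_main (s : ℝ) (hs0 : 0 < s) (hs1 : s < 1) (β : ℝ → ℝ) (hβmeas : Measurable β)
    (c : ℝ) (hc : 0 < c)
    (hβbound : ∀ θ ∈ Set.Icc (-(π/4)) (π/4), θ ≠ 0 →
      c * |θ| ^ (-(1:ℝ) - 2*s) ≤ β θ ∧ β θ ≤ c⁻¹ * |θ| ^ (-(1:ℝ) - 2*s))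
    (k : ℕ) (hk : 2 ≤ k) :
    (c * ((12 - π^2)/(4*(π^2+4))) * (1 - (8/π^2)^s) / (2*s)) * (k:ℝ)^s ≤
      (∫ θ in (-(π/4))..(π/4), β θ * (1 - Real.cos θ ^ (2*k) - Real.sin θ ^ (2*k))) ∧
    (∫ θ in (-(π/4))..(π/4), β θ * (1 - Real.cos θ ^ (2*k) - Real.sin θ ^ (2*k))) ≤
      (c⁻¹ * (1/s + 1/(1-s))) * (k:ℝ)^s := by
  have hπ := Real.pi_pos
  have hπ3 := Real.pi_gt_three
  set g : ℝ → ℝ := fun θ => β θ * (1 - Real.cos θ ^ (2*k) - Real.sin θ ^ (2*k)) with hg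
  set K : ℝ := (k:ℝ) with hK
  have hK2 : (2:ℝ) ≤ K := by rw [hK]; exact_mod_cast hk
  have hK0 : (0:ℝ) < K := by linarith
  set a : ℝ := K ^ (-(2:ℝ)⁻¹) with ha
  have ha0 : 0 < a := Real.rpow_pos_of_pos hK0 _
  -- a ≤ π/4
  have ha_le : a ≤ π/4 := by
    have h1 : a ≤ (2:ℝ) ^ (-(2:ℝ)⁻¹) := by
      apply Real.rpow_le_rpow_of_nonpos (by norm_num) hK2 (by norm_num)
    have h2 : (2:ℝ) ^ (-(2:ℝ)⁻¹) = (Real.sqrt 2)⁻¹ := by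
      rw [Real.rpow_neg (by norm_num), Real.sqrt_eq_rpow]
      norm_num
    have h3 : (Real.sqrt 2)⁻¹ ≤ π/4 := by
      have hs2 : (1.4:ℝ) ≤ Real.sqrt 2 := by
        nlinarith [Real.sqrt_nonneg 2, Real.sq_sqrt (by norm_num : (0:ℝ) ≤ 2)]
      rw [inv_le_iff_one_le_mul₀ (by positivity)]
      nlinarith
    rw [h2] at h1; linarith
  have hδ : (0:ℝ) < (12 - π^2)/(4*(π^2+4)) := by
    have := Real.pi_lt_d2
    apply div_pos <;> nlinarith
  set δ : ℝ := (12 - π^2)/(4*(π^2+4)) with hδdef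
  -- rpow values
  have hVa : a ^ (-(2*s)) = K ^ s := by
    rw [ha, ← Real.rpow_mul hK0.le, show (-(2:ℝ)⁻¹) * (-(2*s)) = s by ring]
  have hVmid : K * a ^ (2 - 2*s) = K ^ s := by
    have h1 : a ^ (2-2*s) = K ^ (s-1) := by
      rw [ha, ← Real.rpow_mul hK0.le, show (-(2:ℝ)⁻¹) * (2-2*s) = s-1 by ring]
    have h2 : K ^ ((1:ℝ) + (s-1)) = K ^ (1:ℝ) * K ^ (s-1) := Real.rpow_add hK0 1 (s-1)
    rw [show (1:ℝ) + (s-1) = s by ring, Real.rpow_one] at h2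
    rw [h1]
    exact h2.symm
  -- (π/4)^(-(2s)) bounds
  have hP0 : (0:ℝ) ≤ (π/4) ^ (-(2*s)) := Real.rpow_nonneg (by positivity) _
  have hP_le : (π/4) ^ (-(2*s)) ≤ (8/π^2)^s * K^s := by
    have h1 : (π/4:ℝ) ^ (-(2*s)) = ((π/4:ℝ)^(-2:ℝ))^s := by
      rw [← Real.rpow_mul (by positivity : (0:ℝ) ≤ π/4), show (-2:ℝ)*s = -(2*s) by ring]
    have h2 : (π/4:ℝ)^(-2:ℝ) = 16/π^2 := by
      rw [show (-2:ℝ) = -((2:ℕ):ℝ) by norm_num, Real.rpow_neg (by positivity),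
        Real.rpow_natCast, div_pow, inv_div]
      norm_num
    rw [h1, h2, show (16/π^2 : ℝ) = (8/π^2) * 2 by ring,
      Real.mul_rpow (by positivity) (by norm_num)]
    exact mul_le_mul_of_nonneg_left (Real.rpow_le_rpow (by norm_num) hK2 hs0.le)
      (Real.rpow_nonneg (by positivity) s)
  have hε : (0:ℝ) < 1 - (8/π^2)^s := by
    have h8 : (8/π^2:ℝ) < 1 := by rw [div_lt_one (by positivity)]; nlinarith
    have := Real.rpow_lt_one (by positivity : (0:ℝ) ≤ 8/π^2) h8 hs0
    linarith
  -- pointwise global bound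
  have hk1 : 1 ≤ k := by omega
  have hgb : ∀ θ ∈ Set.Icc (-(π/4)) (π/4), 0 ≤ g θ ∧ g θ ≤ c⁻¹ * K * |θ| ^ (1 - 2*s) := by
    intro θ hθ
    by_cases hθ0 : θ = 0
    · subst hθ0
      have hz : g 0 = 0 := by
        simp [hg, Real.cos_zero, Real.sin_zero, one_pow,
          zero_pow (by omega : 2*k ≠ 0)]
      rw [hz]
      exact ⟨le_rfl, by positivity⟩
    · obtain ⟨hβl, hβu⟩ := hβbound θ hθ hθ0
      have habs0 : 0 < |θ| := abs_pos.2 hθ0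
      have hf0 : 0 ≤ 1 - Real.cos θ ^ (2*k) - Real.sin θ ^ (2*k) := aux_f_nonneg k hk1 θ
      have hfle : 1 - Real.cos θ ^ (2*k) - Real.sin θ ^ (2*k) ≤ K * θ^2 := aux_f_le k θ
      have hβ0 : 0 ≤ β θ :=
        le_trans (by positivity : (0:ℝ) ≤ c * |θ| ^ (-(1:ℝ) - 2*s)) hβl
      refine ⟨mul_nonneg hβ0 hf0, ?_⟩
      have step1 : g θ ≤ (c⁻¹ * |θ|^(-(1:ℝ)-2*s)) * (K * θ^2) :=
        mul_le_mul hβu hfle hf0 (by positivity)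
      have hsq : θ^2 = |θ|^((2:ℕ):ℝ) := by rw [Real.rpow_natCast, sq_abs]
      have step2 : (c⁻¹ * |θ|^(-(1:ℝ)-2*s)) * (K * θ^2)
          = c⁻¹ * K * |θ| ^ (1 - 2*s) := by
        rw [hsq, show ((2:ℕ):ℝ) = (2:ℝ) by norm_num]
        rw [mul_mul_mul_comm, ← Real.rpow_add habs0,
          show (-(1:ℝ)-2*s) + 2 = 1 - 2*s by ring]
      linarith
  -- integrability of g
  have hab : -(π/4) ≤ (π/4:ℝ) := by linarith
  have hdom : IntervalIntegrable (fun θ : ℝ => c⁻¹ * K * |θ|^(1-2*s)) volume (-(π/4)) (π/4) :=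
    (aux_intable_abs_rpow (by linarith : (-1:ℝ) < 1-2*s) (by positivity : (0:ℝ) ≤ π/4)).const_mul _
  have hgmeas : ∀ (μ : Measure ℝ), AEStronglyMeasurable g μ := fun μ =>
    ((hβmeas.mul ((measurable_const.sub ((Real.measurable_cos.pow_const _))).sub
      (Real.measurable_sin.pow_const _)))).aestronglyMeasurable
  have hgint : IntervalIntegrable g volume (-(π/4)) (π/4) := by
    rw [intervalIntegrable_iff]
    rw [intervalIntegrable_iff] at hdom
    apply hdom.mono' (hgmeas _)
    filter_upwards [MeasureTheory.ae_restrict_mem measurableSet_uIoc] with θ hθ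
    rw [Set.uIoc_of_le hab] at hθ
    have h := hgb θ ⟨hθ.1.le, hθ.2⟩
    rw [Real.norm_eq_abs, abs_of_nonneg h.1]
    exact h.2
  -- subinterval integrability
  have hIc1 : Set.uIcc (-(π/4)) (-a) ⊆ Set.uIcc (-(π/4)) (π/4) := by
    rw [Set.uIcc_of_le (by linarith : -(π/4) ≤ -a), Set.uIcc_of_le hab]
    exact Set.Icc_subset_Icc le_rfl (by linarith)
  have hIc2 : Set.uIcc (-a) a ⊆ Set.uIcc (-(π/4)) (π/4) := by
    rw [Set.uIcc_of_le (by linarith : -a ≤ a), Set.uIcc_of_le hab]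
    exact Set.Icc_subset_Icc (by linarith) (by linarith)
  have hIc3 : Set.uIcc a (π/4) ⊆ Set.uIcc (-(π/4)) (π/4) := by
    rw [Set.uIcc_of_le ha_le, Set.uIcc_of_le hab]
    exact Set.Icc_subset_Icc (by linarith) le_rfl
  have hIc4 : Set.uIcc (-(π/4)) a ⊆ Set.uIcc (-(π/4)) (π/4) := by
    rw [Set.uIcc_of_le (by linarith : -(π/4) ≤ a), Set.uIcc_of_le hab]
    exact Set.Icc_subset_Icc le_rfl (by linarith)
  have hIc5 : Set.uIcc (-a) (π/4) ⊆ Set.uIcc (-(π/4)) (π/4) := by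
    rw [Set.uIcc_of_le (by linarith : -a ≤ π/4), Set.uIcc_of_le hab]
    exact Set.Icc_subset_Icc (by linarith) le_rfl
  have h0not : (0:ℝ) ∉ Set.uIcc a (π/4) := by
    rw [Set.uIcc_of_le ha_le]
    intro h
    exact absurd h.1 (not_le.2 ha0)
  -- value of ∫ θ^(-1-2s) on a..π/4
  have hrval : ∫ θ in a..(π/4), θ^(-(1:ℝ)-2*s)
      = (K^s - (π/4)^(-(2*s)))/(2*s) := by
    have hne : (-(1:ℝ)-2*s) ≠ -1 := by intro h; linarith
    have h2s : (2*s) ≠ 0 := by positivity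
    rw [integral_rpow (Or.inr ⟨hne, h0not⟩),
      show (-(1:ℝ)-2*s)+1 = -(2*s) by ring, hVa]
    field_simp
    ring
  -- LOWER BOUND
  have hLint : IntervalIntegrable (fun θ : ℝ => (c*δ) * θ^(-(1:ℝ)-2*s)) volume a (π/4) :=
    (intervalIntegral.intervalIntegrable_rpow (Or.inr h0not)).const_mul _
  have hlow2 : (c*δ) * ((K^s - (π/4)^(-(2*s)))/(2*s))
      ≤ ∫ θ in a..(π/4), g θ := by
    have hmono := intervalIntegral.integral_mono_on ha_le hLint (hgint.mono_set hIc3) ?_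
    · rw [intervalIntegral.integral_const_mul, hrval] at hmono
      exact hmono
    · intro θ hθ
      have hθ0 : 0 < θ := lt_of_lt_of_le ha0 hθ.1
      obtain ⟨hβl, _⟩ := hβbound θ ⟨by linarith [hθ.1], hθ.2⟩ (ne_of_gt hθ0)
      rw [abs_of_pos hθ0] at hβl
      have hβ0 : 0 ≤ β θ := le_trans (by positivity) hβl
      have hfge : δ ≤ 1 - Real.cos θ ^ (2*k) - Real.sin θ ^ (2*k) :=
        aux_f_ge k hk θ hθ.1 hθ.2
      have key : (c * θ^(-(1:ℝ)-2*s)) * δ ≤ g θ :=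
        mul_le_mul hβl hfge hδ.le hβ0
      calc (c*δ) * θ^(-(1:ℝ)-2*s) = (c * θ^(-(1:ℝ)-2*s)) * δ := by ring
        _ ≤ g θ := key
  have hlow1 : 0 ≤ ∫ θ in (-(π/4))..a, g θ :=
    intervalIntegral.integral_nonneg (by linarith)
      (fun u hu => (hgb u ⟨hu.1, by linarith [hu.2]⟩).1)
  have hsplitL : (∫ θ in (-(π/4))..(π/4), g θ)
      = (∫ θ in (-(π/4))..a, g θ) + ∫ θ in a..(π/4), g θ :=
    (intervalIntegral.integral_add_adjacent_intervals
      (hgint.mono_set hIc4) (hgint.mono_set hIc3)).symm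
  have hLB : (c * δ * (1 - (8/π^2)^s) / (2*s)) * K^s
      ≤ ∫ θ in (-(π/4))..(π/4), g θ := by
    have hKs0 : (0:ℝ) ≤ K^s := Real.rpow_nonneg hK0.le s
    have h1 : K^s * (1 - (8/π^2)^s) ≤ K^s - (π/4)^(-(2*s)) := by
      have he : K^s * (1 - (8/π^2)^s) = K^s - (8/π^2)^s * K^s := by ring
      rw [he]
      linarith [hP_le]
    have h2 : (c*δ/(2*s)) * (K^s * (1 - (8/π^2)^s))
        ≤ (c*δ/(2*s)) * (K^s - (π/4)^(-(2*s))) :=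
      mul_le_mul_of_nonneg_left h1 (by positivity)
    calc (c * δ * (1 - (8/π^2)^s) / (2*s)) * K^s
        = (c*δ/(2*s)) * (K^s * (1 - (8/π^2)^s)) := by ring
      _ ≤ (c*δ/(2*s)) * (K^s - (π/4)^(-(2*s))) := h2
      _ = (c*δ) * ((K^s - (π/4)^(-(2*s)))/(2*s)) := by ring
      _ ≤ ∫ θ in a..(π/4), g θ := hlow2
      _ ≤ ∫ θ in (-(π/4))..(π/4), g θ := by rw [hsplitL]; linarith
  -- UPPER BOUND
  have hKs0 : (0:ℝ) ≤ K^s := Real.rpow_nonneg hK0.le s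
  -- piece 3 : a .. π/4
  have hUint3 : IntervalIntegrable (fun θ : ℝ => c⁻¹ * θ^(-(1:ℝ)-2*s)) volume a (π/4) :=
    (intervalIntegral.intervalIntegrable_rpow (Or.inr h0not)).const_mul _
  have hup3 : (∫ θ in a..(π/4), g θ)
      ≤ c⁻¹ * ((K^s - (π/4)^(-(2*s)))/(2*s)) := by
    have hmono := intervalIntegral.integral_mono_on ha_le (hgint.mono_set hIc3) hUint3 ?_
    · rw [intervalIntegral.integral_const_mul, hrval] at hmono
      exact hmono
    · intro θ hθ
      have hθ0 : 0 < θ := lt_of_lt_of_le ha0 hθ.1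
      obtain ⟨hβl, hβu⟩ := hβbound θ ⟨by linarith [hθ.1], hθ.2⟩ (ne_of_gt hθ0)
      rw [abs_of_pos hθ0] at hβl hβu
      have hf0 : 0 ≤ 1 - Real.cos θ ^ (2*k) - Real.sin θ ^ (2*k) := aux_f_nonneg k hk1 θ
      have hf1 : 1 - Real.cos θ ^ (2*k) - Real.sin θ ^ (2*k) ≤ 1 := by
        have h1 : 0 ≤ Real.cos θ ^ (2*k) := by rw [pow_mul]; positivity
        have h2 : 0 ≤ Real.sin θ ^ (2*k) := by rw [pow_mul]; positivity
        linarith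
      have := mul_le_mul hβu hf1 hf0 (by positivity : 0 ≤ c⁻¹ * θ^(-(1:ℝ)-2*s))
      rw [mul_one] at this
      exact this
  -- piece 1 : -π/4 .. -a
  have habs_neg : ∀ x ∈ Set.uIcc (-(π/4)) (-a), |x| ≠ 0 := by
    intro x hx
    rw [Set.uIcc_of_le (by linarith : -(π/4) ≤ -a)] at hx
    have hx0 : x < 0 := lt_of_le_of_lt hx.2 (by linarith : -a < 0)
    exact abs_ne_zero.mpr (ne_of_lt hx0)
  have hUint1 : IntervalIntegrable (fun θ : ℝ => c⁻¹ * |θ|^(-(1:ℝ)-2*s)) volume (-(π/4)) (-a) := by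
    apply ContinuousOn.intervalIntegrable
    exact continuousOn_const.mul
      ((continuous_abs.continuousOn).rpow_const (fun x hx => Or.inl (habs_neg x hx)))
  have habsval : (∫ θ in (-(π/4))..(-a), |θ|^(-(1:ℝ)-2*s))
      = (K^s - (π/4)^(-(2*s)))/(2*s) := by
    have hcn := intervalIntegral.integral_comp_neg (a := a) (b := π/4)
      (fun x : ℝ => |x|^(-(1:ℝ)-2*s))
    simp only [abs_neg] at hcn
    have hcongr : (∫ θ in a..(π/4), |θ|^(-(1:ℝ)-2*s)) = ∫ θ in a..(π/4), θ^(-(1:ℝ)-2*s) := by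
      apply intervalIntegral.integral_congr
      intro x hx
      rw [Set.uIcc_of_le ha_le] at hx
      simp only [abs_of_pos (lt_of_lt_of_le ha0 hx.1)]
    rw [← hcn, hcongr, hrval]
  have hup1 : (∫ θ in (-(π/4))..(-a), g θ)
      ≤ c⁻¹ * ((K^s - (π/4)^(-(2*s)))/(2*s)) := by
    have hmono := intervalIntegral.integral_mono_on (by linarith : -(π/4) ≤ -a)
      (hgint.mono_set hIc1) hUint1 ?_
    · rw [intervalIntegral.integral_const_mul, habsval] at hmono
      exact hmono
    · intro θ hθ
      have hθ0 : θ < 0 := lt_of_le_of_lt hθ.2 (by linarith)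
      obtain ⟨hβl, hβu⟩ := hβbound θ ⟨hθ.1, by linarith⟩ (ne_of_lt hθ0)
      have hf0 : 0 ≤ 1 - Real.cos θ ^ (2*k) - Real.sin θ ^ (2*k) := aux_f_nonneg k hk1 θ
      have hf1 : 1 - Real.cos θ ^ (2*k) - Real.sin θ ^ (2*k) ≤ 1 := by
        have h1 : 0 ≤ Real.cos θ ^ (2*k) := by rw [pow_mul]; positivity
        have h2 : 0 ≤ Real.sin θ ^ (2*k) := by rw [pow_mul]; positivity
        linarith
      have := mul_le_mul hβu hf1 hf0 (by positivity : 0 ≤ c⁻¹ * |θ|^(-(1:ℝ)-2*s))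
      rw [mul_one] at this
      exact this
  -- piece 2 : -a .. a
  have hUint2 : IntervalIntegrable (fun θ : ℝ => c⁻¹ * K * |θ|^(1-2*s)) volume (-a) a :=
    (aux_intable_abs_rpow (by linarith : (-1:ℝ) < 1-2*s) ha0.le).const_mul _
  have hup2 : (∫ θ in (-a)..a, g θ) ≤ c⁻¹ * (K^s/(1-s)) := by
    have hmono := intervalIntegral.integral_mono_on (by linarith : -a ≤ a)
      (hgint.mono_set hIc2) hUint2 ?_
    · have hval : (∫ θ in (-a)..a, c⁻¹ * K * |θ|^(1-2*s))
          = c⁻¹ * (K^s/(1-s)) := by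
        rw [intervalIntegral.integral_const_mul,
          aux_integral_abs_rpow (by linarith : (-1:ℝ) < 1-2*s) ha0.le,
          show (1-2*s)+1 = 2-2*s by ring]
        have h1s : (1:ℝ) - s ≠ 0 := by intro h; linarith
        have h3 : (2:ℝ) * a^(2-2*s)/(2-2*s) = a^(2-2*s)/(1-s) := by
          rw [div_eq_div_iff (ne_of_gt (by linarith : (0:ℝ) < 2-2*s))
            (ne_of_gt (by linarith : (0:ℝ) < 1-s))]
          ring
        have h2 : c⁻¹ * K * (2 * a^(2-2*s)/(2-2*s)) = c⁻¹ * ((K * a^(2-2*s))/(1-s)) := by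
          rw [h3]; ring
        rw [h2, hVmid]
      rw [hval] at hmono
      exact hmono
    · intro θ hθ
      exact (hgb θ ⟨by linarith [hθ.1], by linarith [hθ.2]⟩).2
  -- combine
  have hsplitU1 : (∫ θ in (-(π/4))..(π/4), g θ)
      = (∫ θ in (-(π/4))..(-a), g θ) + ∫ θ in (-a)..(π/4), g θ :=
    (intervalIntegral.integral_add_adjacent_intervals
      (hgint.mono_set hIc1) (hgint.mono_set hIc5)).symm
  have hsplitU2 : (∫ θ in (-a)..(π/4), g θ)
      = (∫ θ in (-a)..a, g θ) + ∫ θ in a..(π/4), g θ :=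
    (intervalIntegral.integral_add_adjacent_intervals
      (hgint.mono_set hIc2) (hgint.mono_set hIc3)).symm
  have hUB : (∫ θ in (-(π/4))..(π/4), g θ) ≤ (c⁻¹ * (1/s + 1/(1-s))) * K^s := by
    have hPle' : c⁻¹ * ((K^s - (π/4)^(-(2*s)))/(2*s)) ≤ c⁻¹ * (K^s/(2*s)) := by
      apply mul_le_mul_of_nonneg_left _ (by positivity)
      apply div_le_div_of_nonneg_right _ (by positivity)
      linarith
    have harith : c⁻¹ * (K^s/(2*s)) + c⁻¹ * (K^s/(1-s)) + c⁻¹ * (K^s/(2*s))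
        = (c⁻¹ * (1/s + 1/(1-s))) * K^s := by
      have h1s : (1:ℝ) - s ≠ 0 := by intro h; linarith
      have hsne : s ≠ 0 := ne_of_gt hs0
      field_simp
      ring
    rw [hsplitU1, hsplitU2, ← harith]
    linarith
  exact ⟨hLB, hUB⟩

theorem eigenvalue_spectral_asymptotics
    (s : ℝ) (hs0 : 0 < s) (hs1 : s < 1) (β : ℝ → ℝ) (hβmeas : Measurable β)
    (c : ℝ) (hc : 0 < c)
    (hβbound : ∀ θ ∈ Set.Icc (-(π/4)) (π/4), θ ≠ 0 →
      c * |θ| ^ (-(1:ℝ) - 2*s) ≤ β θ ∧ β θ ≤ c⁻¹ * |θ| ^ (-(1:ℝ) - 2*s))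
    (lam : ℕ → ℝ)
    (hlam : ∀ n : ℕ, 1 ≤ n →
      lam n = ∫ θ in (-(π/4))..(π/4),
        β θ * (1 - Real.cos θ ^ (2*n) - Real.sin θ ^ (2*n))) :
    ∃ C : ℝ, 1 ≤ C ∧ ∀ k : ℕ, 2 ≤ k →
      C⁻¹ * (k:ℝ) ^ s ≤ lam k ∧ lam k ≤ C * (k:ℝ) ^ s := by
  have hπ := Real.pi_pos
  have hπ3 := Real.pi_gt_three
  have hπ315 := Real.pi_lt_d2
  have hδ : (0:ℝ) < (12 - π^2)/(4*(π^2+4)) := by apply div_pos <;> nlinarith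
  have hε : (0:ℝ) < 1 - (8/π^2)^s := by
    have h8 : (8/π^2:ℝ) < 1 := by rw [div_lt_one (by positivity)]; nlinarith
    have := Real.rpow_lt_one (by positivity : (0:ℝ) ≤ 8/π^2) h8 hs0
    linarith
  set C₂ : ℝ := c * ((12 - π^2)/(4*(π^2+4))) * (1 - (8/π^2)^s) / (2*s) with hC₂
  set C₁ : ℝ := c⁻¹ * (1/s + 1/(1-s)) with hC₁
  have hC₂0 : 0 < C₂ := by
    apply div_pos _ (by linarith)
    apply mul_pos (mul_pos hc hδ) hε
  have hC₁0 : 0 < C₁ := by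
    apply mul_pos (by positivity)
    have h1 : (0:ℝ) < 1/s := by positivity
    have h2 : (0:ℝ) < 1/(1-s) := by
      apply div_pos one_pos; linarith
    linarith
  refine ⟨max 1 (max C₁ C₂⁻¹), le_max_left _ _, fun k hk => ?_⟩
  have h := aux_main s hs0 hs1 β hβmeas c hc hβbound k hk
  have hKs0 : (0:ℝ) ≤ (k:ℝ)^s := Real.rpow_nonneg (Nat.cast_nonneg k) s
  rw [hlam k (by omega)]
  constructor
  · have hinv : (max 1 (max C₁ C₂⁻¹))⁻¹ ≤ C₂ := by
      have h1 : C₂⁻¹ ≤ max 1 (max C₁ C₂⁻¹) :=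
        le_trans (le_max_right _ _) (le_max_right _ _)
      calc (max 1 (max C₁ C₂⁻¹))⁻¹ ≤ (C₂⁻¹)⁻¹ :=
            inv_anti₀ (by positivity) h1
        _ = C₂ := inv_inv C₂
    calc (max 1 (max C₁ C₂⁻¹))⁻¹ * (k:ℝ)^s ≤ C₂ * (k:ℝ)^s :=
          mul_le_mul_of_nonneg_right hinv hKs0
      _ ≤ _ := h.1
  · calc _ ≤ C₁ * (k:ℝ)^s := h.2
      _ ≤ (max 1 (max C₁ C₂⁻¹)) * (k:ℝ)^s :=
          mul_le_mul_of_nonneg_right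
            (le_trans (le_max_left _ _) (le_max_right _ _)) hKs0
end

section
/- Let 0 < s < 1 and let β : ℝ → ℝ be a measurable function such that for some constant c > 0 one has c·|θ|^(−1−2s) ≤ β(θ) ≤ c⁻¹·|θ|^(−1−2s) for all θ ∈ [−π/4, π/4] \ {0}. For each integer n ≥ 1 set λ_{2n} = ∫_{−π/4}^{π/4} β(θ)·(1 − (cos θ)^{2n} − (sin θ)^{2n}) dθ, and for integers k, l ≥ 1 set c_{k,l} = √((2k+2l+1)/((2k+1)(2l+1)))·√(C(2k+2l, 2k))·∫_{−π/4}^{π/4} β(θ)·(sin θ)^{2k}·(cos θ)^{2l} dθ. Let (b_n)_{n≥0} be differentiable functions on [0, ∞) with b_0 ≡ 0, b_1 ≡ 0, satisfying for all n ≥ 2 and t ≥ 0 the equations b_n'(t) + λ_{2n}·b_n(t) = Σ_{k+l=n, k≥1, l≥1} c_{k,l}·b_k(t)·b_l(t). If for some integer n ≥ 2 one has b_k(0) = 0 for all 2 ≤ k ≤ n−1, then b_k(t) = 0 for all t ≥ 0 and 2 ≤ k ≤ n−1, and b_n(t) = b_n(0)·e^{−λ_{2n}t} for all t ≥ 0.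 -/
open Real MeasureTheory

lemma exp_decay_lemma (a : ℝ) (f f' : ℝ → ℝ)
    (hd : ∀ t : ℝ, 0 ≤ t → HasDerivWithinAt f (f' t) (Set.Ici 0) t)
    (heq : ∀ t : ℝ, 0 ≤ t → f' t = -a * f t) :
    ∀ t : ℝ, 0 ≤ t → f t = f 0 * Real.exp (-a * t) := by
  intro t ht
  set g : ℝ → ℝ := fun u => f u * Real.exp (a * u) with hg
  have hgd : ∀ u ∈ Set.Ico (0:ℝ) t, HasDerivWithinAt g 0 (Set.Ici u) u := by
    intro u hu
    have h1 : HasDerivWithinAt f (f' u) (Set.Ici u) u :=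
      (hd u hu.1).mono (Set.Ici_subset_Ici.mpr hu.1)
    have h2 : HasDerivAt (fun u : ℝ => Real.exp (a * u)) (Real.exp (a * u) * a) u := by
      have : HasDerivAt (fun u : ℝ => a * u) a u := by
        simpa using (hasDerivAt_id u).const_mul a
      exact this.exp
    have h3 := h1.mul h2.hasDerivWithinAt
    have : f' u * Real.exp (a * u) + f u * (Real.exp (a * u) * a) = 0 := by
      rw [heq u hu.1]; ring
    have h4 : HasDerivWithinAt g (f' u * Real.exp (a * u) + f u * (Real.exp (a * u) * a)) (Set.Ici u) u := h3
    rwa [this] at h4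
  have hcont : ContinuousOn g (Set.Icc 0 t) := by
    have hf : ContinuousOn f (Set.Icc 0 t) := fun u hu =>
      ((hd u hu.1).continuousWithinAt).mono (fun x hx => hx.1)
    exact hf.mul ((Real.continuous_exp.comp (continuous_const.mul continuous_id)).continuousOn)
  have hconst := constant_of_has_deriv_right_zero hcont hgd t (Set.right_mem_Icc.mpr ht)
  have hg0 : g 0 = f 0 := by simp [g]
  have : f t * Real.exp (a * t) = f 0 := by rw [← hg0]; exact hconst
  have hexp : Real.exp (a * t) ≠ 0 := Real.exp_ne_zero _
  field_simp [Real.exp_neg] at *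
  rw [Real.exp_neg, ← this, mul_assoc, mul_inv_cancel₀ hexp, mul_one]

theorem single_mode_exact_decay
    (s : ℝ) (hs0 : 0 < s) (hs1 : s < 1) (β : ℝ → ℝ) (hβmeas : Measurable β)
    (c : ℝ) (hc : 0 < c)
    (hβbound : ∀ θ ∈ Set.Icc (-(π/4)) (π/4), θ ≠ 0 →
      c * |θ| ^ (-(1:ℝ) - 2*s) ≤ β θ ∧ β θ ≤ c⁻¹ * |θ| ^ (-(1:ℝ) - 2*s))
    (lam : ℕ → ℝ)
    (hlam : ∀ n : ℕ, 1 ≤ n →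
      lam n = ∫ θ in (-(π/4))..(π/4),
        β θ * (1 - Real.cos θ ^ (2*n) - Real.sin θ ^ (2*n)))
    (cc : ℕ → ℕ → ℝ)
    (hcc : ∀ k l : ℕ, 1 ≤ k → 1 ≤ l →
      cc k l = Real.sqrt ((2*(k:ℝ) + 2*(l:ℝ) + 1) / ((2*(k:ℝ) + 1) * (2*(l:ℝ) + 1))) *
        Real.sqrt (((2*k + 2*l).choose (2*k) : ℝ)) *
        ∫ θ in (-(π/4))..(π/4), β θ * Real.sin θ ^ (2*k) * Real.cos θ ^ (2*l))
    (b b' : ℕ → ℝ → ℝ)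
    (hderiv : ∀ n : ℕ, ∀ t : ℝ, 0 ≤ t → HasDerivWithinAt (b n) (b' n t) (Set.Ici 0) t)
    (hb0 : ∀ t : ℝ, b 0 t = 0) (hb1 : ∀ t : ℝ, b 1 t = 0)
    (hode : ∀ n : ℕ, 2 ≤ n → ∀ t : ℝ, 0 ≤ t →
      b' n t + lam n * b n t =
        ∑ k ∈ Finset.Icc 1 (n-1), cc k (n-k) * b k t * b (n-k) t)
    (n : ℕ) (hn : 2 ≤ n)
    (hinit : ∀ k : ℕ, 2 ≤ k → k < n → b k 0 = 0) :
    (∀ k : ℕ, 2 ≤ k → k < n → ∀ t : ℝ, 0 ≤ t → b k t = 0) ∧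
      (∀ t : ℝ, 0 ≤ t → b n t = b n 0 * Real.exp (-(lam n) * t)) := by
  have key : ∀ k : ℕ, 2 ≤ k → k < n → ∀ t : ℝ, 0 ≤ t → b k t = 0 := by
    intro k
    induction k using Nat.strong_induction_on with
    | _ k ih =>
      intro hk2 hkn t ht
      have hsum : ∀ u : ℝ, 0 ≤ u →
          (∑ j ∈ Finset.Icc 1 (k-1), cc j (k-j) * b j u * b (k-j) u) = 0 := by
        intro u hu
        apply Finset.sum_eq_zero
        intro j hj
        rw [Finset.mem_Icc] at hj
        rcases eq_or_lt_of_le hj.1 with h1 | h1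
        · rw [← h1, hb1]; ring
        · have hj2 : 2 ≤ j := h1
          have hjk : j < k := by omega
          rw [ih j hjk hj2 (lt_trans hjk hkn) u hu]; ring
      have hode' : ∀ u : ℝ, 0 ≤ u → b' k u = -(lam k) * b k u := by
        intro u hu
        have := hode k hk2 u hu
        rw [hsum u hu] at this
        linarith
      have := exp_decay_lemma (lam k) (b k) (b' k) (fun u hu => hderiv k u hu) hode' t ht
      rw [this, hinit k hk2 hkn]; ring
  refine ⟨key, ?_⟩
  have hsum : ∀ u : ℝ, 0 ≤ u →
      (∑ j ∈ Finset.Icc 1 (n-1), cc j (n-j) * b j u * b (n-j) u) = 0 := by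
    intro u hu
    apply Finset.sum_eq_zero
    intro j hj
    rw [Finset.mem_Icc] at hj
    rcases eq_or_lt_of_le hj.1 with h1 | h1
    · rw [← h1, hb1]; ring
    · have hjn : j < n := by omega
      rw [key j h1 hjn u hu]; ring
  have hode' : ∀ u : ℝ, 0 ≤ u → b' n u = -(lam n) * b n u := by
    intro u hu
    have := hode n hn u hu
    rw [hsum u hu] at this
    linarith
  exact exp_decay_lemma (lam n) (b n) (b' n) (fun u hu => hderiv n u hu) hode'
end

section
/- Let 0 < s < 1 and let β : ℝ → ℝ be a measurable function such that for some constant c > 0 one has c·|θ|^(−1−2s) ≤ β(θ) ≤ c⁻¹·|θ|^(−1−2s) for all θ ∈ [−π/4, π/4] \ {0}. For each integer n ≥ 1 set λ_{2n} = ∫_{−π/4}^{π/4} β(θ)·(1 − (cos θ)^{2n} − (sin θ)^{2n}) dθ, and for integers k, l ≥ 1 set c_{k,l} = √((2k+2l+1)/((2k+1)(2l+1)))·√(C(2k+2l, 2k))·∫_{−π/4}^{π/4} β(θ)·(sin θ)^{2k}·(cos θ)^{2l} dθ. Let (b_n)_{n≥0} be differentiable functions on [0, ∞) with b_0 ≡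 0, b_1 ≡ 0, satisfying for all n ≥ 2 and t ≥ 0 the equations b_n'(t) + λ_{2n}·b_n(t) = Σ_{k+l=n, k≥1, l≥1} c_{k,l}·b_k(t)·b_l(t). Then for every n ≥ 2 there exist real coefficients γ_{(j_1,…,j_k)}, indexed by the finitely many tuples (j_1,…,j_k) of integers with 1 ≤ k ≤ n, j_i ≥ 2 for each i, and j_1 + ⋯ + j_k = n, such that for all t ≥ 0, b_n(t) = Σ_{(j_1,…,j_k)} γ_{(j_1,…,j_k)}·e^{−(λ_{2j_1} + λ_{2j_2} + ⋯ + λ_{2j_k})t}. -/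
open Real MeasureTheory

private lemma absRpowInt {r : ℝ} (hr : -1 < r) (a b : ℝ) :
    IntervalIntegrable (fun x : ℝ => |x| ^ r) volume a b := by
  suffices H : ∀ u : ℝ, IntervalIntegrable (fun x : ℝ => |x| ^ r) volume 0 u from
    (H a).symm.trans (H b)
  have H0 : ∀ u : ℝ, 0 ≤ u → IntervalIntegrable (fun x : ℝ => |x| ^ r) volume 0 u := by
    intro u hu
    have h1 := intervalIntegral.intervalIntegrable_rpow' (a := 0) (b := u) hr
    rw [intervalIntegrable_iff] at h1 ⊢
    refine h1.congr_fun ?_ measurableSet_uIoc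
    intro x hx
    rw [Set.uIoc_of_le hu] at hx
    show x ^ r = |x| ^ r
    rw [abs_of_pos hx.1]
  intro u
  rcases le_total 0 u with h | h
  · exact H0 u h
  · rw [IntervalIntegrable.iff_comp_neg]
    simpa [abs_neg] using H0 (-u) (by linarith)

private lemma w_nonneg (m : ℕ) (hm : 1 ≤ m) (θ : ℝ) :
    0 ≤ 1 - Real.cos θ ^ (2*m) - Real.sin θ ^ (2*m) := by
  have hx : Real.cos θ ^ (2*m) ≤ Real.cos θ ^ 2 := by
    rw [pow_mul]
    calc (Real.cos θ ^ 2) ^ m ≤ (Real.cos θ ^ 2) ^ 1 :=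
          pow_le_pow_of_le_one (sq_nonneg _) (by nlinarith [Real.sin_sq_add_cos_sq θ, sq_nonneg (Real.sin θ)]) hm
      _ = Real.cos θ ^ 2 := pow_one _
  have hy : Real.sin θ ^ (2*m) ≤ Real.sin θ ^ 2 := by
    rw [pow_mul]
    calc (Real.sin θ ^ 2) ^ m ≤ (Real.sin θ ^ 2) ^ 1 :=
          pow_le_pow_of_le_one (sq_nonneg _) (by nlinarith [Real.sin_sq_add_cos_sq θ, sq_nonneg (Real.cos θ)]) hm
      _ = Real.sin θ ^ 2 := pow_one _
  nlinarith [Real.sin_sq_add_cos_sq θ]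

private lemma w_le (m : ℕ) (θ : ℝ) :
    1 - Real.cos θ ^ (2*m) - Real.sin θ ^ (2*m) ≤ (m : ℝ) * θ ^ 2 := by
  have hb : (1 : ℝ) + (m:ℝ) * (Real.cos θ ^ 2 - 1) ≤ (Real.cos θ ^ 2) ^ m := by
    have := one_add_mul_le_pow (a := Real.cos θ ^ 2 - 1) (by nlinarith [sq_nonneg (Real.cos θ)]) m
    simpa using this
  have hsin : Real.sin θ ^ 2 ≤ θ ^ 2 := Real.sin_sq_le_sq
  have h1 : Real.cos θ ^ (2*m) = (Real.cos θ ^ 2) ^ m := pow_mul _ 2 m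
  have h2 : (0:ℝ) ≤ Real.sin θ ^ (2*m) := by rw [pow_mul]; positivity
  have hc : Real.cos θ ^ 2 - 1 = -Real.sin θ ^ 2 := by nlinarith [Real.sin_sq_add_cos_sq θ]
  rw [h1]
  nlinarith [Nat.cast_nonneg (α := ℝ) m]

private lemma integF (s : ℝ) (hs0 : 0 < s) (hs1 : s < 1) (β : ℝ → ℝ) (hβmeas : Measurable β)
    (c : ℝ) (hc : 0 < c)
    (hβbound : ∀ θ ∈ Set.Icc (-(π/4)) (π/4), θ ≠ 0 →
      c * |θ| ^ (-(1:ℝ) - 2*s) ≤ β θ ∧ β θ ≤ c⁻¹ * |θ| ^ (-(1:ℝ) - 2*s))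
    (m : ℕ) (hm : 1 ≤ m) :
    IntervalIntegrable
      (fun θ => β θ * (1 - Real.cos θ ^ (2*m) - Real.sin θ ^ (2*m)))
      volume (-(π/4)) (π/4) := by
  have hA : (0:ℝ) < π/4 := by positivity
  have hg : IntervalIntegrable (fun θ : ℝ => c⁻¹ * (m:ℝ) * |θ| ^ ((1:ℝ) - 2*s))
      volume (-(π/4)) (π/4) := (absRpowInt (by linarith) _ _).const_mul _
  refine hg.mono_fun' ?_ ?_
  · exact ((hβmeas.mul ((measurable_const.sub ((Real.measurable_cos).pow_const _)).sub
      ((Real.measurable_sin).pow_const _)))).aestronglyMeasurable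
  · have h0 : ∀ᵐ (θ : ℝ), θ ≠ 0 := by
      rw [MeasureTheory.ae_iff]
      simp only [not_not, Set.setOf_eq_eq_singleton]
      exact Real.volume_singleton
    filter_upwards [ae_restrict_of_ae h0, ae_restrict_mem measurableSet_uIoc]
      with θ hθ0 hθmem
    have hθI : θ ∈ Set.Icc (-(π/4)) (π/4) := by
      rw [Set.uIoc_of_le (by linarith)] at hθmem
      exact ⟨hθmem.1.le, hθmem.2⟩
    obtain ⟨hβlo, hβhi⟩ := hβbound θ hθI hθ0
    have hβpos : 0 < β θ := lt_of_lt_of_le (by positivity) hβlo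
    have hw0 := w_nonneg m hm θ
    have hw1 := w_le m θ
    have habs : |θ| > 0 := abs_pos.mpr hθ0
    show ‖β θ * (1 - Real.cos θ ^ (2*m) - Real.sin θ ^ (2*m))‖ ≤ _
    rw [Real.norm_eq_abs, abs_of_nonneg (mul_nonneg hβpos.le hw0)]
    calc β θ * (1 - Real.cos θ ^ (2*m) - Real.sin θ ^ (2*m))
        ≤ (c⁻¹ * |θ| ^ (-(1:ℝ) - 2*s)) * ((m:ℝ) * θ ^ 2) := by
          apply mul_le_mul hβhi hw1 hw0 (by positivity)
      _ = c⁻¹ * (m:ℝ) * |θ| ^ ((1:ℝ) - 2*s) := by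
          rw [show θ ^ 2 = |θ| ^ ((2:ℕ):ℝ) by rw [Real.rpow_natCast]; simp [sq_abs],
            show (((2:ℕ)):ℝ) = (2:ℝ) by norm_num]
          rw [mul_assoc, mul_comm (|θ| ^ (-(1:ℝ) - 2*s)), mul_assoc, mul_assoc,
            ← Real.rpow_add habs]
          ring_nf

private lemma alg_ineq (x y : ℝ) (hx : 0 ≤ x) (hy : 0 ≤ y) (hxy : x + y = 1)
    (a b : ℕ) (ha : 2 ≤ a) (hb : 2 ≤ b) :
    2 * x^2 * y^2 ≤ (1 - x^a - y^a) + (1 - x^b - y^b) - (1 - x^(a+b) - y^(a+b)) := by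
  have hx1 : x ≤ 1 := by linarith
  have hy1 : y ≤ 1 := by linarith
  have hxa : x ^ a ≤ x ^ 2 := pow_le_pow_of_le_one hx hx1 ha
  have hxb : x ^ b ≤ x ^ 2 := pow_le_pow_of_le_one hx hx1 hb
  have hya : y ^ a ≤ y ^ 2 := pow_le_pow_of_le_one hy hy1 ha
  have hyb : y ^ b ≤ y ^ 2 := pow_le_pow_of_le_one hy hy1 hb
  have hx2 : (0:ℝ) ≤ 1 - x^2 := by nlinarith
  have hy2 : (0:ℝ) ≤ 1 - y^2 := by nlinarith
  have h1 : (1 - x^2) * (1 - x^2) ≤ (1 - x^a) * (1 - x^b) := by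
    apply mul_le_mul (by linarith) (by linarith) hx2 (by nlinarith [pow_nonneg hx a, pow_le_one₀ hx hx1 (n := a)])
  have h2 : (1 - y^2) * (1 - y^2) ≤ (1 - y^a) * (1 - y^b) := by
    apply mul_le_mul (by linarith) (by linarith) hy2 (by nlinarith [pow_nonneg hy a, pow_le_one₀ hy hy1 (n := a)])
  have key : (1 - x^a - y^a) + (1 - x^b - y^b) - (1 - x^(a+b) - y^(a+b))
      = (1 - x^a) * (1 - x^b) + (1 - y^a) * (1 - y^b) - 1 := by
    rw [pow_add, pow_add]; ring
  have hsub : y = 1 - x := by linarith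
  have ident : (1 - x^2) * (1 - x^2) + (1 - y^2) * (1 - y^2) - 1 = 2 * x^2 * y^2 := by
    subst hsub; ring
  linarith [h1, h2]

private lemma lam_strict (s : ℝ) (hs0 : 0 < s) (hs1 : s < 1) (β : ℝ → ℝ) (hβmeas : Measurable β)
    (c : ℝ) (hc : 0 < c)
    (hβbound : ∀ θ ∈ Set.Icc (-(π/4)) (π/4), θ ≠ 0 →
      c * |θ| ^ (-(1:ℝ) - 2*s) ≤ β θ ∧ β θ ≤ c⁻¹ * |θ| ^ (-(1:ℝ) - 2*s))
    (lam : ℕ → ℝ)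
    (hlam : ∀ n : ℕ, 1 ≤ n →
      lam n = ∫ θ in (-(π/4))..(π/4),
        β θ * (1 - Real.cos θ ^ (2*n) - Real.sin θ ^ (2*n)))
    (a b : ℕ) (ha : 2 ≤ a) (hb : 2 ≤ b) :
    lam (a + b) < lam a + lam b := by
  have hA : (0:ℝ) < π/4 := by positivity
  set F : ℕ → ℝ → ℝ := fun m θ => β θ * (1 - Real.cos θ ^ (2*m) - Real.sin θ ^ (2*m)) with hF
  have Ia : IntervalIntegrable (F a) volume (-(π/4)) (π/4) :=
    integF s hs0 hs1 β hβmeas c hc hβbound a (by omega)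
  have Ib : IntervalIntegrable (F b) volume (-(π/4)) (π/4) :=
    integF s hs0 hs1 β hβmeas c hc hβbound b (by omega)
  have Iab : IntervalIntegrable (F (a+b)) volume (-(π/4)) (π/4) :=
    integF s hs0 hs1 β hβmeas c hc hβbound (a+b) (by omega)
  set φ : ℝ → ℝ := fun θ => F a θ + F b θ - F (a+b) θ with hφ
  have hφint : IntervalIntegrable φ volume (-(π/4)) (π/4) := (Ia.add Ib).sub Iab
  -- pointwise facts
  have hφval : ∀ θ : ℝ, θ ∈ Set.Icc (-(π/4)) (π/4) → θ ≠ 0 →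
      c * (π/4) ^ (-(1:ℝ) - 2*s) *
        (2 * (Real.cos θ ^ 2)^2 * (Real.sin θ ^ 2)^2) ≤ φ θ := by
    intro θ hθ hθ0
    obtain ⟨hβlo, _⟩ := hβbound θ hθ hθ0
    have habs : 0 < |θ| := abs_pos.mpr hθ0
    have habsle : |θ| ≤ π/4 := abs_le.mpr ⟨hθ.1, hθ.2⟩
    have hrpow : (π/4 : ℝ) ^ (-(1:ℝ) - 2*s) ≤ |θ| ^ (-(1:ℝ) - 2*s) :=
      Real.rpow_le_rpow_of_nonpos habs habsle (by linarith)
    have hβlo2 : c * (π/4) ^ (-(1:ℝ) - 2*s) ≤ β θ := by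
      calc c * (π/4) ^ (-(1:ℝ) - 2*s) ≤ c * |θ| ^ (-(1:ℝ) - 2*s) := by
            apply mul_le_mul_of_nonneg_left hrpow hc.le
        _ ≤ β θ := hβlo
    set x := Real.cos θ ^ 2
    set y := Real.sin θ ^ 2
    have hxy : x + y = 1 := by rw [add_comm]; exact Real.sin_sq_add_cos_sq θ
    have halg := alg_ineq x y (sq_nonneg _) (sq_nonneg _) hxy a b ha hb
    have hφeq : φ θ = β θ *
        ((1 - x^a - y^a) + (1 - x^b - y^b) - (1 - x^(a+b) - y^(a+b))) := by
      simp only [hφ, hF]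
      rw [pow_mul, pow_mul, pow_mul, pow_mul, pow_mul, pow_mul]
      ring
    rw [hφeq]
    have h2 : (0:ℝ) ≤ 2 * x^2 * y^2 := by positivity
    calc c * (π/4) ^ (-(1:ℝ) - 2*s) * (2 * x^2 * y^2)
        ≤ β θ * (2 * x^2 * y^2) := by
          apply mul_le_mul_of_nonneg_right hβlo2 h2
      _ ≤ β θ * _ := by
          apply mul_le_mul_of_nonneg_left halg
          exact le_trans (by positivity) hβlo2
  have hφ0 : φ 0 = 0 := by
    simp only [hφ, hF]
    have h2a : 2*a ≠ 0 := by omega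
    have h2b : 2*b ≠ 0 := by omega
    have h2ab : 2*(a+b) ≠ 0 := by omega
    simp [Real.cos_zero, Real.sin_zero, zero_pow h2a, zero_pow h2b, zero_pow h2ab]
  have hφnonneg : ∀ θ ∈ Set.Icc (-(π/4)) (π/4), 0 ≤ φ θ := by
    intro θ hθ
    by_cases hθ0 : θ = 0
    · subst hθ0; rw [hφ0]
    · refine le_trans ?_ (hφval θ hθ hθ0)
      positivity
  -- define the continuous minorant
  set h : ℝ → ℝ := fun θ => c * (π/4) ^ (-(1:ℝ) - 2*s) *
      (2 * (Real.cos θ ^ 2)^2 * (Real.sin θ ^ 2)^2) with hh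
  have hhcont : Continuous h := by fun_prop
  have hhint : IntervalIntegrable h volume 0 (π/4) := hhcont.intervalIntegrable _ _
  have hsub1 : Set.uIcc (0:ℝ) (π/4) ⊆ Set.uIcc (-(π/4)) (π/4) := by
    rw [Set.uIcc_of_le (by linarith), Set.uIcc_of_le (by linarith)]
    exact Set.Icc_subset_Icc (by linarith) le_rfl
  have hsub2 : Set.uIcc (-(π/4)) (0:ℝ) ⊆ Set.uIcc (-(π/4)) (π/4) := by
    rw [Set.uIcc_of_le (by linarith), Set.uIcc_of_le (by linarith)]
    exact Set.Icc_subset_Icc le_rfl (by linarith)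
  have hφint1 : IntervalIntegrable φ volume 0 (π/4) := hφint.mono_set hsub1
  have hφint2 : IntervalIntegrable φ volume (-(π/4)) 0 := hφint.mono_set hsub2
  have hpos : 0 < ∫ θ in (0:ℝ)..(π/4), h θ := by
    apply intervalIntegral.intervalIntegral_pos_of_pos_on hhint _ hA
    intro θ hθ
    obtain ⟨hθ1, hθ2⟩ := hθ
    have hsinpos : 0 < Real.sin θ := Real.sin_pos_of_pos_of_lt_pi hθ1 (by linarith [Real.pi_pos])
    have hcospos : 0 < Real.cos θ := Real.cos_pos_of_mem_Ioo
      ⟨by linarith [Real.pi_pos], by linarith [Real.pi_pos]⟩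
    have : (0:ℝ) < (π/4) ^ (-(1:ℝ) - 2*s) := Real.rpow_pos_of_pos hA _
    simp only [hh]
    positivity
  have hmono : ∫ θ in (0:ℝ)..(π/4), h θ ≤ ∫ θ in (0:ℝ)..(π/4), φ θ := by
    apply intervalIntegral.integral_mono_on hA.le hhint hφint1
    intro θ hθ
    by_cases hθ0 : θ = 0
    · subst hθ0
      rw [hφ0]
      simp [hh]
    · exact hφval θ ⟨by linarith [hθ.1], hθ.2⟩ hθ0
  have hleft : 0 ≤ ∫ θ in (-(π/4))..(0:ℝ), φ θ := by
    apply intervalIntegral.integral_nonneg (by linarith)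
    intro u hu
    exact hφnonneg u ⟨hu.1, by linarith [hu.2]⟩
  have hsplit : (∫ θ in (-(π/4))..(0:ℝ), φ θ) + ∫ θ in (0:ℝ)..(π/4), φ θ
      = ∫ θ in (-(π/4))..(π/4), φ θ :=
    intervalIntegral.integral_add_adjacent_intervals hφint2 hφint1
  have hkey : 0 < ∫ θ in (-(π/4))..(π/4), φ θ := by
    rw [← hsplit]
    have := lt_of_lt_of_le hpos hmono
    linarith
  have hint_eq : (∫ θ in (-(π/4))..(π/4), φ θ)
      = (∫ θ in (-(π/4))..(π/4), F a θ) + (∫ θ in (-(π/4))..(π/4), F b θ)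
        - ∫ θ in (-(π/4))..(π/4), F (a+b) θ := by
    rw [← intervalIntegral.integral_add Ia Ib, ← intervalIntegral.integral_sub (Ia.add Ib) Iab]
  rw [hint_eq] at hkey
  rw [hlam a (by omega), hlam b (by omega), hlam (a+b) (by omega)]
  simp only [hF] at hkey
  linarith

private lemma ode_rep {ι : Type} (Q : Finset ι) (ν : ι → ℝ) (D : ι → ℝ) (lamn : ℝ)
    (hne : ∀ x ∈ Q, ν x ≠ lamn)
    (f f' : ℝ → ℝ)
    (hderiv : ∀ t : ℝ, 0 ≤ t → HasDerivWithinAt f (f' t) (Set.Ici 0) t)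
    (hode : ∀ t : ℝ, 0 ≤ t → f' t + lamn * f t = ∑ x ∈ Q, D x * Real.exp (-(ν x) * t)) :
    ∀ t : ℝ, 0 ≤ t → f t = (f 0 - ∑ x ∈ Q, D x / (lamn - ν x)) * Real.exp (-lamn * t)
      + ∑ x ∈ Q, (D x / (lamn - ν x)) * Real.exp (-(ν x) * t) := by
  have hexpDeriv : ∀ (d u : ℝ), HasDerivAt (fun v : ℝ => Real.exp (d * v))
      (d * Real.exp (d * u)) u := by
    intro d u
    have h := (((hasDerivAt_id u).const_mul d)).exp
    have hval : Real.exp (d * id u) * (d * 1) = d * Real.exp (d * u) := by simp [mul_comm]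
    rw [hval] at h
    exact h
  set g : ℝ → ℝ := fun t => Real.exp (lamn * t) * f t
    - ∑ x ∈ Q, (D x / (lamn - ν x)) * Real.exp ((lamn - ν x) * t) with hg
  have hgderiv : ∀ t : ℝ, 0 ≤ t → HasDerivWithinAt g 0 (Set.Ici 0) t := by
    intro t ht
    have h1 : HasDerivWithinAt (fun u => Real.exp (lamn * u) * f u)
        (lamn * Real.exp (lamn * t) * f t + Real.exp (lamn * t) * f' t) (Set.Ici 0) t :=
      ((hexpDeriv lamn t).hasDerivWithinAt).mul (hderiv t ht)
    have h2 : HasDerivWithinAt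
        (fun u => ∑ x ∈ Q, (D x / (lamn - ν x)) * Real.exp ((lamn - ν x) * u))
        (∑ x ∈ Q, D x * Real.exp ((lamn - ν x) * t)) (Set.Ici 0) t := by
      apply HasDerivWithinAt.fun_sum
      intro x hx
      have hd : lamn - ν x ≠ 0 := sub_ne_zero.mpr (Ne.symm (hne x hx))
      have h := ((hexpDeriv (lamn - ν x) t).hasDerivWithinAt
        (s := Set.Ici 0)).const_mul (D x / (lamn - ν x))
      have hval : (D x / (lamn - ν x)) * ((lamn - ν x) * Real.exp ((lamn - ν x) * t))
          = D x * Real.exp ((lamn - ν x) * t) := by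
        field_simp
      rw [hval] at h
      exact h
    have h3 := h1.sub h2
    refine h3.congr_deriv ?_
    have hodet := hode t ht
    have key : Real.exp (lamn * t) * (f' t + lamn * f t)
        = ∑ x ∈ Q, D x * Real.exp ((lamn - ν x) * t) := by
      rw [hodet, Finset.mul_sum]
      apply Finset.sum_congr rfl
      intro x _
      rw [show (lamn - ν x) * t = lamn * t + (-(ν x) * t) by ring, Real.exp_add]
      ring
    linear_combination key
  intro t ht
  have hgconst : g t = g 0 := by
    rcases eq_or_lt_of_le ht with rfl | ht'
    · rfl
    have hcont : ContinuousOn g (Set.Icc 0 t) := by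
      intro u hu
      exact ((hgderiv u hu.1).continuousWithinAt).mono
        (fun v hv => Set.mem_Ici.mpr hv.1)
    exact constant_of_has_deriv_right_zero hcont (fun u hu =>
      (hgderiv u hu.1).mono (Set.Ici_subset_Ici.mpr hu.1)) t ⟨ht, le_rfl⟩
  have hg0 : g 0 = f 0 - ∑ x ∈ Q, D x / (lamn - ν x) := by
    simp [hg]
  have hmain : Real.exp (lamn * t) * f t
      = (f 0 - ∑ x ∈ Q, D x / (lamn - ν x))
        + ∑ x ∈ Q, (D x / (lamn - ν x)) * Real.exp ((lamn - ν x) * t) := by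
    have h := hgconst
    rw [hg0] at h
    simp only [hg] at h
    linarith
  have hfin : f t = Real.exp (-(lamn * t)) * (Real.exp (lamn * t) * f t) := by
    rw [← mul_assoc, ← Real.exp_add]
    simp
  rw [hfin, hmain, mul_add, Finset.mul_sum]
  congr 1
  · rw [show -lamn * t = -(lamn * t) by ring]
    ring
  · apply Finset.sum_congr rfl
    intro x _
    rw [mul_comm (Real.exp (-(lamn * t))), mul_assoc, ← Real.exp_add]
    ring_nf

private lemma sum_image_filter {ι κ : Type} [DecidableEq κ] [DecidableEq ι]
    (Q : Finset ι) (f : ι → κ) (w : ι → ℝ) (E : κ → ℝ) :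
    ∑ L ∈ Q.image f, (∑ x ∈ Q.filter (fun x => f x = L), w x) * E L
      = ∑ x ∈ Q, w x * E (f x) := by
  rw [← Finset.sum_fiberwise_of_maps_to (fun x hx => Finset.mem_image_of_mem f hx)
    (fun x => w x * E (f x))]
  apply Finset.sum_congr rfl
  intro L _
  rw [Finset.sum_mul]
  apply Finset.sum_congr rfl
  intro x hx
  rw [(Finset.mem_filter.mp hx).2]

private lemma list_rate (lam : ℕ → ℝ)
    (hstrict : ∀ a b : ℕ, 2 ≤ a → 2 ≤ b → lam (a + b) < lam a + lam b) :
    ∀ L : List ℕ, 2 ≤ L.length → (∀ j ∈ L, 2 ≤ j) →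
      lam L.sum < (L.map lam).sum := by
  intro L
  induction L with
  | nil => intro h; simp at h
  | cons a tl ih =>
    intro hlen hmem
    have ha : 2 ≤ a := hmem a List.mem_cons_self
    have htl : ∀ j ∈ tl, 2 ≤ j := fun j hj => hmem j (List.mem_cons_of_mem a hj)
    match tl, htl with
    | [], _ => simp at hlen
    | [x], htl =>
      have hx : 2 ≤ x := htl x List.mem_cons_self
      simp only [List.sum_cons, List.sum_nil, List.map_cons, List.map_nil, add_zero]
      exact hstrict a x ha hx
    | (x :: y :: tl'), htl =>
      have hlen' : 2 ≤ (x :: y :: tl').length := by simp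
      have hsum2 : 2 ≤ (x :: y :: tl').sum := by
        have := htl x (by simp)
        simp only [List.sum_cons]
        omega
      calc lam (a + (x :: y :: tl').sum) < lam a + lam (x :: y :: tl').sum :=
            hstrict a _ ha hsum2
        _ < lam a + ((x :: y :: tl').map lam).sum := by
            have := ih hlen' htl
            linarith
        _ = (((a :: x :: y :: tl')).map lam).sum := by simp

private lemma two_mul_length_le_sum : ∀ L : List ℕ, (∀ j ∈ L, 2 ≤ j) → 2 * L.length ≤ L.sum := by
  intro L
  induction L with
  | nil => simp
  | cons a tl ih =>
    intro h
    have ha := h a List.mem_cons_self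
    have := ih (fun j hj => h j (List.mem_cons_of_mem a hj))
    simp only [List.length_cons, List.sum_cons]
    omega

theorem coefficients_as_sums_of_exponentials
    (s : ℝ) (hs0 : 0 < s) (hs1 : s < 1) (β : ℝ → ℝ) (hβmeas : Measurable β)
    (c : ℝ) (hc : 0 < c)
    (hβbound : ∀ θ ∈ Set.Icc (-(π/4)) (π/4), θ ≠ 0 →
      c * |θ| ^ (-(1:ℝ) - 2*s) ≤ β θ ∧ β θ ≤ c⁻¹ * |θ| ^ (-(1:ℝ) - 2*s))
    (lam : ℕ → ℝ)
    (hlam : ∀ n : ℕ, 1 ≤ n →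
      lam n = ∫ θ in (-(π/4))..(π/4),
        β θ * (1 - Real.cos θ ^ (2*n) - Real.sin θ ^ (2*n)))
    (cc : ℕ → ℕ → ℝ)
    (hcc : ∀ k l : ℕ, 1 ≤ k → 1 ≤ l →
      cc k l = Real.sqrt ((2*(k:ℝ) + 2*(l:ℝ) + 1) / ((2*(k:ℝ) + 1) * (2*(l:ℝ) + 1))) *
        Real.sqrt (((2*k + 2*l).choose (2*k) : ℝ)) *
        ∫ θ in (-(π/4))..(π/4), β θ * Real.sin θ ^ (2*k) * Real.cos θ ^ (2*l))
    (b b' : ℕ → ℝ → ℝ)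
    (hderiv : ∀ n : ℕ, ∀ t : ℝ, 0 ≤ t → HasDerivWithinAt (b n) (b' n t) (Set.Ici 0) t)
    (hb0 : ∀ t : ℝ, b 0 t = 0) (hb1 : ∀ t : ℝ, b 1 t = 0)
    (hode : ∀ n : ℕ, 2 ≤ n → ∀ t : ℝ, 0 ≤ t →
      b' n t + lam n * b n t =
        ∑ k ∈ Finset.Icc 1 (n-1), cc k (n-k) * b k t * b (n-k) t) :
    ∀ n : ℕ, 2 ≤ n →
      ∃ (T : Finset (List ℕ)) (γ : List ℕ → ℝ),
        (∀ L ∈ T, L ≠ [] ∧ L.length ≤ n ∧ (∀ j ∈ L, 2 ≤ j) ∧ L.sum = n) ∧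
        ∀ t : ℝ, 0 ≤ t →
          b n t = ∑ L ∈ T, γ L * Real.exp (-((L.map lam).sum) * t) := by
  have hstrict : ∀ a b : ℕ, 2 ≤ a → 2 ≤ b → lam (a + b) < lam a + lam b :=
    fun a b ha hb => lam_strict s hs0 hs1 β hβmeas c hc hβbound lam hlam a b ha hb
  have hrate := list_rate lam hstrict
  intro n
  induction n using Nat.strong_induction_on with
  | _ n IH =>
    intro hn
    -- Step 1: representation of each summand of the RHS
    have hrep : ∀ k : ℕ, ∃ (S : Finset (List ℕ)) (d : List ℕ → ℝ),
        (∀ L ∈ S, (∀ j ∈ L, 2 ≤ j) ∧ L.sum = n ∧ 2 ≤ L.length) ∧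
        (k ∈ Finset.Icc 1 (n-1) → ∀ t : ℝ, 0 ≤ t →
          cc k (n-k) * b k t * b (n-k) t
            = ∑ L ∈ S, d L * Real.exp (-((L.map lam).sum) * t)) := by
      intro k
      by_cases hk : k ∈ Finset.Icc 1 (n-1)
      swap
      · exact ⟨∅, 0, by simp, fun h => absurd h hk⟩
      rw [Finset.mem_Icc] at hk
      by_cases hk1 : k = 1
      · refine ⟨∅, 0, by simp, fun _ t ht => ?_⟩
        subst hk1
        simp [hb1 t]
      by_cases hk2 : k = n - 1
      · refine ⟨∅, 0, by simp, fun _ t ht => ?_⟩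
        have : n - k = 1 := by omega
        rw [this]
        simp [hb1 t]
      have h2k : 2 ≤ k := by omega
      have h2nk : 2 ≤ n - k := by omega
      have hkn : k < n := by omega
      have hnkn : n - k < n := by omega
      obtain ⟨T1, γ1, hT1, he1⟩ := IH k hkn h2k
      obtain ⟨T2, γ2, hT2, he2⟩ := IH (n-k) hnkn h2nk
      refine ⟨(T1 ×ˢ T2).image (fun p => p.1 ++ p.2),
        fun L => ∑ p ∈ (T1 ×ˢ T2).filter (fun p => p.1 ++ p.2 = L),
          cc k (n-k) * γ1 p.1 * γ2 p.2, ?_, ?_⟩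
      · intro L hL
        obtain ⟨p, hp, hpl⟩ := Finset.mem_image.mp hL
        rw [Finset.mem_product] at hp
        obtain ⟨hne1, hlen1, hj1, hsum1⟩ := hT1 p.1 hp.1
        obtain ⟨hne2, hlen2, hj2, hsum2⟩ := hT2 p.2 hp.2
        subst hpl
        refine ⟨?_, ?_, ?_⟩
        · intro j hj
          rcases List.mem_append.mp hj with h | h
          · exact hj1 j h
          · exact hj2 j h
        · rw [List.sum_append, hsum1, hsum2]; omega
        · rw [List.length_append]
          have l1 : 1 ≤ p.1.length := List.length_pos_iff.mpr hne1
          have l2 : 1 ≤ p.2.length := List.length_pos_iff.mpr hne2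
          omega
      · intro _ t ht
        rw [he1 t ht, he2 t ht]
        rw [sum_image_filter ((T1 ×ˢ T2)) (fun p => p.1 ++ p.2)
          (fun p => cc k (n-k) * γ1 p.1 * γ2 p.2)
          (fun L => Real.exp (-((L.map lam).sum) * t))]
        rw [mul_assoc, Finset.sum_mul_sum, Finset.sum_product]
        rw [Finset.mul_sum]
        apply Finset.sum_congr rfl
        intro L1 _
        rw [Finset.mul_sum]
        apply Finset.sum_congr rfl
        intro L2 _
        rw [List.map_append, List.sum_append,
          show -(((L1.map lam).sum + (L2.map lam).sum)) * t
            = -((L1.map lam).sum) * t + -((L2.map lam).sum) * t by ring,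
          Real.exp_add]
        ring
    choose S d hcond heq using hrep
    -- Step 2: the sigma index set
    set Q : Finset ((_ : ℕ) × List ℕ) := (Finset.Icc 1 (n-1)).sigma S with hQ
    set ν : ((_ : ℕ) × List ℕ) → ℝ := fun p => ((p.2.map lam).sum) with hν
    set D : ((_ : ℕ) × List ℕ) → ℝ := fun p => d p.1 p.2 with hD
    have hmemQ : ∀ p ∈ Q, (∀ j ∈ p.2, 2 ≤ j) ∧ p.2.sum = n ∧ 2 ≤ p.2.length := by
      intro p hp
      rw [hQ, Finset.mem_sigma] at hp
      exact hcond p.1 p.2 hp.2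
    have hne : ∀ p ∈ Q, ν p ≠ lam n := by
      intro p hp
      obtain ⟨hj, hsum, hlen⟩ := hmemQ p hp
      have := hrate p.2 hlen hj
      rw [hsum] at this
      exact (ne_of_gt this)
    have hode' : ∀ t : ℝ, 0 ≤ t →
        b' n t + lam n * b n t = ∑ p ∈ Q, D p * Real.exp (-(ν p) * t) := by
      intro t ht
      rw [hode n hn t ht, hQ, Finset.sum_sigma]
      apply Finset.sum_congr rfl
      intro k hk
      exact heq k hk t ht
    have hsol := ode_rep Q ν D (lam n) hne (b n) (b' n) (hderiv n) hode'
    -- Step 3: final packaging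
    have himagelen : ∀ L ∈ Q.image (fun p => p.2), 2 ≤ L.length := by
      intro L hL
      obtain ⟨p, hp, hpl⟩ := Finset.mem_image.mp hL
      subst hpl
      exact (hmemQ p hp).2.2
    have hnotmem : [n] ∉ Q.image (fun p => p.2) := by
      intro hmem
      have := himagelen [n] hmem
      simp at this
    refine ⟨insert [n] (Q.image (fun p => p.2)),
      fun L => if L = [n] then (b n 0 - ∑ p ∈ Q, D p / (lam n - ν p))
        else ∑ p ∈ Q.filter (fun p => p.2 = L), D p / (lam n - ν p), ?_, ?_⟩
    · intro L hL
      rcases Finset.mem_insert.mp hL with rfl | hL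
      · refine ⟨by simp, by simp; omega, ?_, by simp⟩
        intro j hj
        rw [List.mem_singleton] at hj
        omega
      · obtain ⟨p, hp, hpl⟩ := Finset.mem_image.mp hL
        obtain ⟨hj, hsum, hlen⟩ := hmemQ p hp
        subst hpl
        refine ⟨?_, ?_, hj, hsum⟩
        · intro hnil
          rw [hnil] at hlen
          simp at hlen
        · have := two_mul_length_le_sum p.2 hj
          omega
    · intro t ht
      rw [hsol t ht, Finset.sum_insert hnotmem]
      congr 1
      · have hif : (fun L => if L = [n] then (b n 0 - ∑ p ∈ Q, D p / (lam n - ν p))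
            else ∑ p ∈ Q.filter (fun p => p.2 = L), D p / (lam n - ν p)) [n]
            = b n 0 - ∑ p ∈ Q, D p / (lam n - ν p) := by simp
        rw [hif]
        simp only [List.map_cons, List.map_nil, List.sum_cons, List.sum_nil, add_zero]
      · rw [← sum_image_filter Q (fun p => p.2)
          (fun p => D p / (lam n - ν p))
          (fun L => Real.exp (-((L.map lam).sum) * t))]
        apply Finset.sum_congr rfl
        intro L hL
        have hLne : L ≠ [n] := by
          intro h
          exact hnotmem (h ▸ hL)
        have hif : (fun L' => if L' = [n] then (b n 0 - ∑ p ∈ Q, D p / (lam n - ν p))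
            else ∑ p ∈ Q.filter (fun p => p.2 = L'), D p / (lam n - ν p)) L
            = ∑ p ∈ Q.filter (fun p => p.2 = L), D p / (lam n - ν p) := by simp [hLne]
        rw [hif]
end
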